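/- arXiv:2111.04030 — 3 statements merged into one kernel-verified Lean document; each statement's English description precedes it below -/
import Mathlib

section
/- For any Borel probability measure μ on the torus 𝕋 = [0,1) and any two partition factors m₁, m₂ ≥ 2, the upper and lower Rényi dimensions of μ computed with base m₁ agree with those computed with base m₂. -/
set_option maxHeartbeats 1000000


open MeasureTheory Filter Topology Real
open scoped ENNReal

noncomputable section

abbrev Cantor := ℕ → Bool

/-- `j`-fold left shift of a binary sequence. -/
def shiftk (x : Cantor) (j : ℕ) : Cantor := fun i => x (i + j)

/-- the left shift `T`. -/
def Tshift (x : Cantor) : Cantor := fun i => x (i + 1)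

/-- binary evaluation map `v`. -/
noncomputable def eval (x : Cantor) : ℝ := ∑' i : ℕ, if x i then ((2:ℝ) ^ (i + 1))⁻¹ else 0

noncomputable def negMulLog2 (p : ℝ) : ℝ := - p * Real.logb 2 p

/-- sliding count probability of a word `w` of length `l` in the prefix `x_0^{n-1}`. -/
noncomputable def slidingP (x : Cantor) (n l : ℕ) (w : Fin l → Bool) : ℝ :=
  (((Finset.range (n - l + 1)).filter (fun i => ∀ j : Fin l, x (i + (j : ℕ)) = w j)).card : ℝ)
    / ((n - l + 1 : ℕ) : ℝ)

/-- sliding block entropy `H_l(x_0^{n-1})`. -/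
noncomputable def slidingH (x : Cantor) (n l : ℕ) : ℝ :=
  (1 / (l : ℝ)) * ∑ w : Fin l → Bool, negMulLog2 (slidingP x n l w)

/-- disjoint block probability `P^d`. -/
noncomputable def disjP (x : Cantor) (n l : ℕ) (w : Fin l → Bool) : ℝ :=
  (((Finset.range (n / l)).filter (fun i => ∀ j : Fin l, x (l * i + (j : ℕ)) = w j)).card : ℝ)
    / ((n / l : ℕ) : ℝ)

/-- disjoint block entropy `H^d_l(x_0^{n-1})`. -/
noncomputable def disjH (x : Cantor) (n l : ℕ) : ℝ :=
  (1 / (l : ℝ)) * ∑ w : Fin l → Bool, negMulLog2 (disjP x n l w)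

/-- finite-state dimension via sliding block entropies. -/
noncomputable def dimFS (x : Cantor) : ℝ :=
  ⨅ l : ℕ, Filter.liminf (fun n => slidingH x n (l + 1)) Filter.atTop

/-- finite-state strong dimension. -/
noncomputable def DimFS (x : Cantor) : ℝ :=
  ⨅ l : ℕ, Filter.limsup (fun n => slidingH x n (l + 1)) Filter.atTop

/-- cylinder set. -/
def Cyl (l : ℕ) (w : Fin l → Bool) : Set Cantor := {y | ∀ j : Fin l, y (j : ℕ) = w j}

/-- empirical measures `ν_n = n⁻¹ ∑_{j<n} δ_{T^j x}` on Cantor space. -/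
noncomputable def empMeas (x : Cantor) (n : ℕ) : Measure Cantor :=
  (n : ℝ≥0∞)⁻¹ • ∑ j ∈ Finset.range n, Measure.dirac (shiftk x j)

/-- weak convergence of a sequence of measures. -/
def WeakConv {α : Type*} [TopologicalSpace α] [MeasurableSpace α]
    (ν : ℕ → Measure α) (μ : Measure α) : Prop :=
  ∀ f : BoundedContinuousFunction α ℂ,
    Tendsto (fun n => ∫ y, f y ∂(ν n)) atTop (nhds (∫ y, f y ∂μ))

/-- block entropy `H_n(μ)` of a measure on Cantor space. -/
noncomputable def measH (μ : Measure Cantor) (n : ℕ) : ℝ :=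
  ∑ w : Fin n → Bool, negMulLog2 ((μ (Cyl n w)).toReal)

/-- lower average entropy. -/
noncomputable def Hminus (μ : Measure Cantor) : ℝ :=
  Filter.liminf (fun n => measH μ n / n) Filter.atTop

/-- upper average entropy. -/
noncomputable def Hplus (μ : Measure Cantor) : ℝ :=
  Filter.limsup (fun n => measH μ n / n) Filter.atTop

/-- set of subsequence weak limits of the empirical measures of `x`. -/
def Wx (x : Cantor) : Set (Measure Cantor) :=
  {μ | IsProbabilityMeasure μ ∧
      ∃ φ : ℕ → ℕ, StrictMono φ ∧ (∀ m, 0 < φ m) ∧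
        WeakConv (fun m => empMeas x (φ m)) μ}

/-- normality of a binary sequence. -/
def IsNormal (x : Cantor) : Prop :=
  ∀ (l : ℕ) (w : Fin l → Bool),
    Tendsto (fun n => slidingP x n l w) atTop (nhds (((2:ℝ) ^ l)⁻¹))

/-- Weyl averages `(1/n) ∑_{j<n} e^{2πik v(T^j x)}`. -/
noncomputable def weylAvg (x : Cantor) (k : ℤ) (n : ℕ) : ℂ :=
  (n : ℂ)⁻¹ * ∑ j ∈ Finset.range n,
    Complex.exp (2 * (Real.pi : ℂ) * Complex.I * (k : ℂ) * ((eval (shiftk x j) : ℝ) : ℂ))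

/-- Weyl averages on the torus, `(1/n) ∑_{j<n} e^{2πik 2^j r}`. -/
noncomputable def weylAvgT (r : ℝ) (k : ℤ) (n : ℕ) : ℂ :=
  (n : ℂ)⁻¹ * ∑ j ∈ Finset.range n,
    Complex.exp (2 * (Real.pi : ℂ) * Complex.I * (k : ℂ) * (((2:ℝ) ^ j * r : ℝ) : ℂ))

/-- empirical measures `(1/n) ∑_{j<n} δ_{2^j r mod 1}` on the torus. -/
noncomputable def empMeasT (r : ℝ) (n : ℕ) : Measure UnitAddCircle :=
  (n : ℝ≥0∞)⁻¹ • ∑ j ∈ Finset.range n, Measure.dirac (((2:ℝ) ^ j * r : ℝ) : UnitAddCircle)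

/-- dyadic interval `[j/2^k, (j+1)/2^k)` on the torus. -/
def dyadicI (k j : ℕ) : Set UnitAddCircle :=
  (fun t : ℝ => (t : UnitAddCircle)) '' Set.Ico ((j : ℝ) / 2 ^ k) (((j : ℝ) + 1) / 2 ^ k)

/-- a real number is a dyadic rational. -/
def IsDyadic (t : ℝ) : Prop := ∃ (a : ℤ) (n : ℕ), t = (a : ℝ) / 2 ^ n

/-- value of a finite binary word. -/
noncomputable def val2 (l : ℕ) (w : Fin l → Bool) : ℝ :=
  ∑ j : Fin l, if w j then ((2:ℝ) ^ ((j : ℕ) + 1))⁻¹ else 0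

/-- dyadic interval `I_w` on the torus. -/
def IwT (l : ℕ) (w : Fin l → Bool) : Set UnitAddCircle :=
  (fun t : ℝ => (t : UnitAddCircle)) '' Set.Ico (val2 l w) (val2 l w + ((2:ℝ) ^ l)⁻¹)

/-- value of a finite base-`m` word. -/
noncomputable def valm (m n : ℕ) (w : Fin n → Fin m) : ℝ :=
  ∑ j : Fin n, ((w j : ℕ) : ℝ) / (m : ℝ) ^ ((j : ℕ) + 1)

/-- base-`m` interval `I^m_w` on the torus. -/
def ImT (m n : ℕ) (w : Fin n → Fin m) : Set UnitAddCircle :=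
  (fun t : ℝ => (t : UnitAddCircle)) '' Set.Ico (valm m n w) (valm m n w + ((m : ℝ) ^ n)⁻¹)

/-- base-`m` partition entropy `H^m_n(μ)` (natural logarithm). -/
noncomputable def measHT (μ : Measure UnitAddCircle) (m n : ℕ) : ℝ :=
  ∑ w : Fin n → Fin m, Real.negMulLog ((μ (ImT m n w)).toReal)

/-- lower Rényi dimension w.r.t. partition factor `m`. -/
noncomputable def renyiLower (μ : Measure UnitAddCircle) (m : ℕ) : ℝ :=
  Filter.liminf (fun n => measHT μ m n / (n * Real.log m)) Filter.atTop

/-- upper Rényi dimension w.r.t. partition factor `m`. -/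
noncomputable def renyiUpper (μ : Measure UnitAddCircle) (m : ℕ) : ℝ :=
  Filter.limsup (fun n => measHT μ m n / (n * Real.log m)) Filter.atTop

section RenyiAuxSection
open Set
namespace RenyiAux


lemma negMulLog_sum_ge {ι : Type*} (t : Finset ι) (x : ι → ℝ) (hx : ∀ i ∈ t, 0 ≤ x i) :
    Real.negMulLog (∑ i ∈ t, x i) ≤ ∑ i ∈ t, Real.negMulLog (x i) := by
  have hs : Real.negMulLog (∑ i ∈ t, x i) = ∑ i ∈ t, (-(x i) * Real.log (∑ j ∈ t, x j)) := by
    rw [Real.negMulLog, ← Finset.sum_neg_distrib, Finset.sum_mul]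
  rw [hs]
  refine Finset.sum_le_sum fun i hi => ?_
  rcases eq_or_lt_of_le (hx i hi) with h0 | h0
  · simp [← h0, Real.negMulLog]
  · have hle : x i ≤ ∑ j ∈ t, x j := Finset.single_le_sum hx hi
    have := Real.log_le_log h0 hle
    rw [Real.negMulLog]
    nlinarith

lemma sum_negMulLog_le {ι : Type*} (t : Finset ι) (x : ι → ℝ) (hx : ∀ i ∈ t, 0 ≤ x i) :
    ∑ i ∈ t, Real.negMulLog (x i) ≤
      Real.negMulLog (∑ i ∈ t, x i) + (∑ i ∈ t, x i) * Real.log t.card := by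
  rcases t.eq_empty_or_nonempty with rfl | ht
  · simp
  set s := ∑ i ∈ t, x i with hsdef
  have hs0 : 0 ≤ s := Finset.sum_nonneg hx
  rcases eq_or_lt_of_le hs0 with h0 | h0
  · have hz : ∀ i ∈ t, x i = 0 := by
      intro i hi
      have := (Finset.sum_eq_zero_iff_of_nonneg hx).mp h0.symm
      exact this i hi
    rw [Finset.sum_congr rfl fun i hi => by rw [hz i hi]]
    simp [← h0]
  · have hc : (0:ℝ) < t.card := by exact_mod_cast Finset.card_pos.mpr ht
    have hJ := Real.concaveOn_negMulLog.le_map_sum (t := t)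
      (w := fun _ => (t.card : ℝ)⁻¹) (p := x)
      (fun i _ => by positivity)
      (by rw [Finset.sum_const, nsmul_eq_mul]; field_simp)
      (fun i hi => hx i hi)
    simp only [smul_eq_mul] at hJ
    have h1 : ∑ i ∈ t, (t.card : ℝ)⁻¹ * Real.negMulLog (x i)
        = (t.card : ℝ)⁻¹ * ∑ i ∈ t, Real.negMulLog (x i) := by
      rw [Finset.mul_sum]
    have h2 : ∑ i ∈ t, (t.card : ℝ)⁻¹ * x i = (t.card : ℝ)⁻¹ * s := by
      rw [Finset.mul_sum]
    rw [h1, h2] at hJ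
    have h3 : Real.negMulLog ((t.card : ℝ)⁻¹ * s)
        = (t.card : ℝ)⁻¹ * (Real.negMulLog s + s * Real.log t.card) := by
      rw [Real.negMulLog, Real.negMulLog, Real.log_mul (by positivity) (ne_of_gt h0),
        Real.log_inv]
      ring
    rw [h3] at hJ
    calc ∑ i ∈ t, Real.negMulLog (x i)
        = (t.card : ℝ) * ((t.card : ℝ)⁻¹ * ∑ i ∈ t, Real.negMulLog (x i)) := by
          field_simp
      _ ≤ (t.card : ℝ) * ((t.card : ℝ)⁻¹ * (Real.negMulLog s + s * Real.log t.card)) :=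
          mul_le_mul_of_nonneg_left hJ (le_of_lt hc)
      _ = Real.negMulLog s + s * Real.log t.card := by field_simp



def grid (N j : ℕ) : Set UnitAddCircle :=
  (fun t : ℝ => (t : UnitAddCircle)) '' Set.Ico ((j:ℝ)/N) (((j:ℝ)+1)/N)

lemma injOn01 : Set.InjOn (fun t : ℝ => (t : UnitAddCircle)) (Set.Ico 0 1) := by
  intro x hx y hy h
  exact (AddCircle.coe_eq_coe_iff_of_mem_Ico (p := 1) (a := 0)
    (by simpa using hx) (by simpa using hy)).mp h

lemma Ico_subset01 {N j : ℕ} (hj : j < N) :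
    Set.Ico ((j:ℝ)/N) (((j:ℝ)+1)/N) ⊆ Set.Ico (0:ℝ) 1 := by
  have hN : (0:ℝ) < N := by exact_mod_cast Nat.lt_of_le_of_lt (Nat.zero_le j) hj
  intro t ht
  constructor
  · exact le_trans (by positivity) ht.1
  · refine lt_of_lt_of_le ht.2 ?_
    rw [div_le_one hN]
    exact_mod_cast Nat.succ_le_of_lt hj

-- representative
lemma coe_rep (x : UnitAddCircle) :
    ((((AddCircle.equivIco 1 0 x : Set.Ico (0:ℝ) (0+1))) : ℝ) : UnitAddCircle) = x := by
  exact (AddCircle.equivIco 1 0).symm_apply_apply x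

lemma rep_mem (x : UnitAddCircle) :
    ((AddCircle.equivIco 1 0 x : Set.Ico (0:ℝ) (0+1)) : ℝ) ∈ Set.Ico (0:ℝ) 1 := by
  have := (AddCircle.equivIco 1 0 x).2
  simpa using this

lemma mem_grid_iff {N j : ℕ} (hj : j < N) {t : ℝ} (ht : t ∈ Set.Ico (0:ℝ) 1) :
    (t : UnitAddCircle) ∈ grid N j ↔ t ∈ Set.Ico ((j:ℝ)/N) (((j:ℝ)+1)/N) := by
  constructor
  · rintro ⟨s, hs, hst⟩
    have := injOn01 (Ico_subset01 hj hs) ht hst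
    rwa [← this]
  · intro h; exact ⟨t, h, rfl⟩

lemma measurableSet_grid {N j : ℕ} (hj : j < N) : MeasurableSet (grid N j) := by
  have heq : grid N j = (AddCircle.measurableEquivIco (T := 1) 0) ⁻¹'
      (Subtype.val ⁻¹' Set.Ico ((j:ℝ)/N) (((j:ℝ)+1)/N)) := by
    ext x
    simp only [Set.mem_preimage]
    have hx := coe_rep x
    constructor
    · intro h
      rw [← hx] at h
      exact (mem_grid_iff hj (rep_mem x)).mp h
    · intro h
      rw [← hx]
      exact (mem_grid_iff hj (rep_mem x)).mpr h
  rw [heq]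
  exact (AddCircle.measurableEquivIco (T := 1) 0).measurable
    (measurableSet_Ico.preimage measurable_subtype_coe)

lemma grid_cover (N : ℕ) (hN : 1 ≤ N) (x : UnitAddCircle) : ∃ j < N, x ∈ grid N j := by
  set t : ℝ := ((AddCircle.equivIco 1 0 x : Set.Ico (0:ℝ) (0+1)) : ℝ) with htdef
  have ht : t ∈ Set.Ico (0:ℝ) 1 := rep_mem x
  have hN' : (0:ℝ) < N := by exact_mod_cast hN
  have hj : ⌊t * N⌋₊ < N := by
    have h1 : t * N < N := by nlinarith [ht.2]
    have := Nat.floor_lt (mul_nonneg ht.1 hN'.le) |>.mpr (by exact_mod_cast h1)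
    exact_mod_cast this
  refine ⟨⌊t * N⌋₊, hj, ?_⟩
  have h2 : (⌊t * N⌋₊ : ℝ) ≤ t * N := Nat.floor_le (mul_nonneg ht.1 hN'.le)
  have h3 : t * N < ⌊t * N⌋₊ + 1 := Nat.lt_floor_add_one _
  have hmem : t ∈ Set.Ico ((⌊t * N⌋₊:ℝ)/N) (((⌊t * N⌋₊:ℝ)+1)/N) := by
    constructor
    · rw [div_le_iff₀ hN']; linarith
    · rw [lt_div_iff₀ hN']; linarith
  rw [← coe_rep x]
  exact (mem_grid_iff hj ht).mpr hmem


namespace Part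
open Finset
variable (μ : Measure UnitAddCircle) [IsProbabilityMeasure μ]

lemma grid_inter {N M j i : ℕ} (hj : j < N) (hi : i < M) :
    grid N j ∩ grid M i = (fun t : ℝ => (t : UnitAddCircle)) ''
      (Set.Ico ((j:ℝ)/N) (((j:ℝ)+1)/N) ∩ Set.Ico ((i:ℝ)/M) (((i:ℝ)+1)/M)) :=
  (injOn01.image_inter (Ico_subset01 hj) (Ico_subset01 hi)).symm

lemma grid_disjoint {N j j' : ℕ} (hj : j < N) (hj' : j' < N) (hne : j ≠ j') :
    grid N j ∩ grid N j' = ∅ := by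
  rw [grid_inter hj hj']
  have hN : (0:ℝ) < N := by exact_mod_cast Nat.lt_of_le_of_lt (Nat.zero_le j) hj
  convert Set.image_empty _
  rcases hne.lt_or_gt with h | h
  · have : ((j:ℝ)+1)/N ≤ (j':ℝ)/N := by
      apply div_le_div_of_nonneg_right ?_ hN.le |>.trans_eq rfl
      exact_mod_cast Nat.succ_le_of_lt h
    ext t; simp only [Set.mem_inter_iff, Set.mem_Ico, Set.mem_empty_iff_false, iff_false]
    rintro ⟨⟨_, h2⟩, ⟨h3, _⟩⟩; linarith
  · have : ((j':ℝ)+1)/N ≤ (j:ℝ)/N := by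
      apply div_le_div_of_nonneg_right ?_ hN.le |>.trans_eq rfl
      exact_mod_cast Nat.succ_le_of_lt h
    ext t; simp only [Set.mem_inter_iff, Set.mem_Ico, Set.mem_empty_iff_false, iff_false]
    rintro ⟨⟨h2, _⟩, ⟨_, h4⟩⟩; linarith

lemma measure_eq_sum_inter {N : ℕ} (hN : 1 ≤ N) (A : Set UnitAddCircle)
    (hA : MeasurableSet A) :
    μ A = ∑ j ∈ Finset.range N, μ (A ∩ grid N j) := by
  have hcov : A = ⋃ j ∈ Finset.range N, A ∩ grid N j := by
    ext x; constructor
    · intro hx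
      obtain ⟨j, hj, hxg⟩ := grid_cover N hN x
      exact Set.mem_biUnion (Finset.mem_range.mpr hj) ⟨hx, hxg⟩
    · rintro hx
      simp only [Set.mem_iUnion] at hx
      obtain ⟨j, _, hj, _⟩ := hx
      exact hj
  conv_lhs => rw [hcov]
  rw [measure_biUnion_finset]
  · intro j hj j' hj' hne
    simp only [Finset.coe_range, Set.mem_Iio] at hj hj'
    refine Set.disjoint_left.mpr fun x hx hx' => ?_
    have : x ∈ grid N j ∩ grid N j' := ⟨hx.2, hx'.2⟩
    rw [grid_disjoint hj hj' hne] at this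
    exact this
  · intro j hj
    exact hA.inter (measurableSet_grid (Finset.mem_range.mp hj))

lemma toReal_eq_sum_inter {N : ℕ} (hN : 1 ≤ N) (A : Set UnitAddCircle)
    (hA : MeasurableSet A) :
    (μ A).toReal = ∑ j ∈ Finset.range N, (μ (A ∩ grid N j)).toReal := by
  rw [measure_eq_sum_inter μ hN A hA, ENNReal.toReal_sum]
  intro j _; exact measure_ne_top μ _

def E (N : ℕ) : ℝ := ∑ j ∈ Finset.range N, Real.negMulLog ((μ (grid N j)).toReal)

lemma sum_toReal_grid {N : ℕ} (hN : 1 ≤ N) :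
    ∑ j ∈ Finset.range N, (μ (grid N j)).toReal = 1 := by
  have := toReal_eq_sum_inter μ hN Set.univ MeasurableSet.univ
  simpa [measure_univ] using this.symm


lemma grid_inter_empty {N M j i : ℕ} (hj : j < N) (hi : i < M)
    (h : ¬(j * M < (i + 1) * N ∧ i * N < (j + 1) * M)) :
    grid N j ∩ grid M i = ∅ := by
  have hN : (0:ℝ) < N := by exact_mod_cast Nat.lt_of_le_of_lt (Nat.zero_le j) hj
  have hM : (0:ℝ) < M := by exact_mod_cast Nat.lt_of_le_of_lt (Nat.zero_le i) hi
  rw [grid_inter hj hi]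
  convert Set.image_empty _
  push_neg at h
  ext t
  simp only [Set.mem_inter_iff, Set.mem_Ico, Set.mem_empty_iff_false, iff_false]
  rintro ⟨⟨h1, h2⟩, h3, h4⟩
  rcases Nat.lt_or_ge (j * M) ((i + 1) * N) with hc | hc
  · have hc2 := h hc
    have : ((j:ℝ)+1)/N ≤ (i:ℝ)/M := by
      rw [div_le_div_iff₀ hN hM]
      have : ((i:ℝ) * N : ℝ) ≥ ((j:ℝ)+1) * M := by exact_mod_cast hc2
      linarith
    linarith
  · have : ((i:ℝ)+1)/M ≤ (j:ℝ)/N := by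
      rw [div_le_div_iff₀ hM hN]
      have : ((j:ℝ) * M : ℝ) ≥ ((i:ℝ)+1) * N := by exact_mod_cast hc
      linarith
    linarith

/-- the fine-in-coarse condition set -/
def T (N M j : ℕ) : Finset ℕ :=
  (Finset.range M).filter (fun i => j * M < (i + 1) * N ∧ i * N < (j + 1) * M)

/-- coarse atoms meeting a fine atom: at most 2 (when N ≤ M). -/
lemma card_coarse_le {N M : ℕ} (hN : 1 ≤ N) (hNM : N ≤ M) (i : ℕ) :
    ((Finset.range N).filter (fun j => j * M < (i + 1) * N ∧ i * N < (j + 1) * M)).card ≤ 2 := by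
  have hM : 1 ≤ M := le_trans hN hNM
  set a := i * N / M with ha
  have hsub : (Finset.range N).filter (fun j => j * M < (i + 1) * N ∧ i * N < (j + 1) * M)
      ⊆ Finset.Ico a (a + 2) := by
    intro j hjmem
    simp only [Finset.mem_filter, Finset.mem_range] at hjmem
    obtain ⟨hjN, hc1, hc2⟩ := hjmem
    have haM : a * M ≤ i * N := Nat.div_mul_le_self _ _
    have haM2 : i * N < (a + 1) * M := by
      rw [ha]
      exact (Nat.div_lt_iff_lt_mul (Nat.lt_of_lt_of_le Nat.zero_lt_one hM)).mp (Nat.lt_succ_self _)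
    refine Finset.mem_Ico.mpr ⟨?_, ?_⟩
    · by_contra hlt
      push_neg at hlt
      have : (j + 1) * M ≤ a * M := Nat.mul_le_mul_right _ hlt
      omega
    · have h1 : j * M < (i + 1) * N := hc1
      have h2 : (i + 1) * N = i * N + N := by ring
      have h3 : j * M < (a + 1) * M + M := by
        calc j * M < (i+1) * N := h1
        _ = i * N + N := by ring
        _ < (a+1) * M + N := by omega
        _ ≤ (a+1) * M + M := by omega
      have : j * M < (a + 2) * M := by nlinarith
      have := Nat.lt_of_mul_lt_mul_right this
      omega
  calc _ ≤ (Finset.Ico a (a+2)).card := Finset.card_le_card hsub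
    _ = 2 := by rw [Nat.card_Ico]; omega

/-- fine atoms meeting a coarse atom: at most M/N + 2. -/
lemma card_fine_le {N M : ℕ} (hN : 1 ≤ N) (hNM : N ≤ M) (j : ℕ) :
    (T N M j).card ≤ M / N + 2 := by
  set b := j * M / N with hb
  have hsub : T N M j ⊆ Finset.Ico b (b + (M / N + 2)) := by
    intro i himem
    simp only [T, Finset.mem_filter, Finset.mem_range] at himem
    obtain ⟨hiM, hc1, hc2⟩ := himem
    have hbN : b * N ≤ j * M := Nat.div_mul_le_self _ _
    have hbN2 : j * M < (b + 1) * N := by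
      rw [hb]
      exact (Nat.div_lt_iff_lt_mul hN).mp (Nat.lt_succ_self _)
    have hMN : M < (M / N + 1) * N := by
      exact (Nat.div_lt_iff_lt_mul hN).mp (Nat.lt_succ_self _)
    refine Finset.mem_Ico.mpr ⟨?_, ?_⟩
    · by_contra hlt
      push_neg at hlt
      have : (i + 1) * N ≤ b * N := Nat.mul_le_mul_right _ hlt
      omega
    · have h3 : i * N < (b + 1) * N + (M / N + 1) * N := by
        calc i * N < (j + 1) * M := hc2
        _ = j * M + M := by ring
        _ < (b+1) * N + M := by omega
        _ < (b+1) * N + (M / N + 1) * N := Nat.add_lt_add_left hMN _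
      have : i * N < (b + (M / N + 2)) * N := h3.trans_eq (by ring)
      have := Nat.lt_of_mul_lt_mul_right this
      omega
  calc _ ≤ (Finset.Ico b (b + (M/N+2))).card := Finset.card_le_card hsub
    _ = M / N + 2 := by rw [Nat.card_Ico, Nat.add_sub_cancel_left]


def E2 (N M : ℕ) : ℝ := ∑ j ∈ Finset.range N, ∑ i ∈ Finset.range M,
  Real.negMulLog ((μ (grid N j ∩ grid M i)).toReal)

lemma E2_swap (N M : ℕ) : E2 μ N M = E2 μ M N := by
  rw [E2, Finset.sum_comm]
  refine Finset.sum_congr rfl fun i _ => Finset.sum_congr rfl fun j _ => ?_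
  rw [Set.inter_comm]

lemma E_le_E2 {N M : ℕ} (hM : 1 ≤ M) : E μ N ≤ E2 μ N M := by
  refine Finset.sum_le_sum fun j hj => ?_
  have hjN := Finset.mem_range.mp hj
  rw [toReal_eq_sum_inter μ hM _ (measurableSet_grid hjN)]
  exact negMulLog_sum_ge _ _ (fun i _ => ENNReal.toReal_nonneg)

lemma E2_le {N M : ℕ} (hN : 1 ≤ N) (hM : 1 ≤ M) (C : ℕ) (hC1 : 1 ≤ C)
    (hC : ∀ j < N, (T N M j).card ≤ C) :
    E2 μ N M ≤ E μ N + Real.log C := by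
  have hmain : ∀ j ∈ Finset.range N,
      ∑ i ∈ Finset.range M, Real.negMulLog ((μ (grid N j ∩ grid M i)).toReal)
        ≤ Real.negMulLog ((μ (grid N j)).toReal)
            + ((μ (grid N j)).toReal) * Real.log C := by
    intro j hj
    have hjN := Finset.mem_range.mp hj
    have hvanish : ∀ i ∈ Finset.range M, i ∉ T N M j →
        Real.negMulLog ((μ (grid N j ∩ grid M i)).toReal) = 0 := by
      intro i hi hni
      have hiM := Finset.mem_range.mp hi
      have : ¬(j * M < (i + 1) * N ∧ i * N < (j + 1) * M) := by
        intro hcond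
        exact hni (by simp [T, Finset.mem_filter, Finset.mem_range.mpr hiM, hcond])
      rw [grid_inter_empty hjN hiM this]
      simp
    have hsumeq : ∑ i ∈ Finset.range M, Real.negMulLog ((μ (grid N j ∩ grid M i)).toReal)
        = ∑ i ∈ T N M j, Real.negMulLog ((μ (grid N j ∩ grid M i)).toReal) := by
      refine (Finset.sum_subset (Finset.filter_subset _ _) hvanish).symm
    have hvanish2 : ∀ i ∈ Finset.range M, i ∉ T N M j →
        ((μ (grid N j ∩ grid M i)).toReal) = 0 := by
      intro i hi hni
      have hiM := Finset.mem_range.mp hi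
      have : ¬(j * M < (i + 1) * N ∧ i * N < (j + 1) * M) := by
        intro hcond
        exact hni (by simp [T, Finset.mem_filter, Finset.mem_range.mpr hiM, hcond])
      rw [grid_inter_empty hjN hiM this]
      simp
    have hTsub : T N M j ⊆ Finset.range M := Finset.filter_subset _ _
    have hmass : ∑ i ∈ T N M j, ((μ (grid N j ∩ grid M i)).toReal)
        = (μ (grid N j)).toReal :=
      (Finset.sum_subset hTsub hvanish2).trans
        (toReal_eq_sum_inter μ hM _ (measurableSet_grid hjN)).symm
    rw [hsumeq]
    calc ∑ i ∈ T N M j, Real.negMulLog ((μ (grid N j ∩ grid M i)).toReal)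
        ≤ Real.negMulLog (∑ i ∈ T N M j, ((μ (grid N j ∩ grid M i)).toReal))
          + (∑ i ∈ T N M j, ((μ (grid N j ∩ grid M i)).toReal)) * Real.log (T N M j).card :=
          sum_negMulLog_le _ _ (fun i _ => ENNReal.toReal_nonneg)
      _ ≤ Real.negMulLog ((μ (grid N j)).toReal)
          + ((μ (grid N j)).toReal) * Real.log C := by
          rw [hmass]
          refine add_le_add (le_refl _) (mul_le_mul_of_nonneg_left ?_ ENNReal.toReal_nonneg)
          rcases Nat.eq_zero_or_pos (T N M j).card with h0 | h0
          · rw [h0]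
            simpa using Real.log_nonneg (by exact_mod_cast hC1)
          · exact Real.log_le_log (by exact_mod_cast h0) (by exact_mod_cast hC j hjN)
  calc E2 μ N M ≤ ∑ j ∈ Finset.range N, (Real.negMulLog ((μ (grid N j)).toReal)
      + ((μ (grid N j)).toReal) * Real.log C) := Finset.sum_le_sum hmain
    _ = E μ N + (∑ j ∈ Finset.range N, (μ (grid N j)).toReal) * Real.log C := by
        rw [Finset.sum_add_distrib, Finset.sum_mul]; rfl
    _ = E μ N + Real.log C := by rw [sum_toReal_grid μ hN, one_mul]

lemma toReal_prob_le_one (A : Set UnitAddCircle) : (μ A).toReal ≤ 1 := by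
  have := prob_le_one (μ := μ) (s := A)
  calc (μ A).toReal ≤ (1 : ℝ≥0∞).toReal := ENNReal.toReal_mono (by simp) this
    _ = 1 := by simp

lemma E_nonneg (N : ℕ) : 0 ≤ E μ N :=
  Finset.sum_nonneg fun j _ =>
    Real.negMulLog_nonneg ENNReal.toReal_nonneg (toReal_prob_le_one μ _)

lemma E_le_log {N : ℕ} (hN : 1 ≤ N) : E μ N ≤ Real.log N := by
  have := sum_negMulLog_le (Finset.range N) (fun j => (μ (grid N j)).toReal)
    (fun j _ => ENNReal.toReal_nonneg)
  rw [sum_toReal_grid μ hN] at this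
  simp only [Real.negMulLog_one, one_mul, zero_add, Finset.card_range] at this
  exact this

theorem E_compare {N M : ℕ} (hN : 1 ≤ N) (hNM : N ≤ M) :
    E μ M ≤ E μ N + Real.log ((M / N + 2 : ℕ) : ℝ) ∧ E μ N ≤ E μ M + Real.log 2 := by
  have hM : 1 ≤ M := le_trans hN hNM
  constructor
  · calc E μ M ≤ E2 μ M N := E_le_E2 μ hN
      _ = E2 μ N M := (E2_swap μ N M).symm
      _ ≤ E μ N + Real.log ((M / N + 2 : ℕ) : ℝ) :=
          E2_le μ hN hM (M / N + 2) (one_le_two.trans (Nat.le_add_left 2 _)) (fun j _ => card_fine_le hN hNM j)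
  · calc E μ N ≤ E2 μ N M := E_le_E2 μ hM
      _ = E2 μ M N := E2_swap μ N M
      _ ≤ E μ M + Real.log 2 := by
          refine E2_le μ hM hN 2 (by omega) (fun i _ => ?_)
          have := card_coarse_le hN hNM i
          refine le_trans (le_of_eq ?_) this
          rw [T]
          congr 1
          ext j
          simp [and_comm]

end Part

def wordEquiv (m n : ℕ) : (Fin n → Fin m) ≃ Fin (m ^ n) where
  toFun w := finFunctionFinEquiv (fun j => w j.rev)
  invFun c := fun j => finFunctionFinEquiv.symm c j.rev
  left_inv w := by funext j; simp [Fin.rev_rev]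
  right_inv c := by
    simp only []
    have : (fun j : Fin n => (fun j : Fin n => finFunctionFinEquiv.symm c j.rev) j.rev)
        = finFunctionFinEquiv.symm c := by
      funext j; simp [Fin.rev_rev]
    rw [this, Equiv.apply_symm_apply]

lemma wordEquiv_val (m n : ℕ) (w : Fin n → Fin m) :
    ((wordEquiv m n w : ℕ) : ℝ) = ∑ j : Fin n, ((w j : ℕ) : ℝ) * (m : ℝ) ^ (n - 1 - (j : ℕ)) := by
  have h1 : (wordEquiv m n w : ℕ) = ∑ j : Fin n, ((w j.rev : ℕ)) * m ^ (j : ℕ) := by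
    simp [wordEquiv, finFunctionFinEquiv_apply_val]
  have h2 : ∑ j : Fin n, ((w j.rev : ℕ)) * m ^ (j : ℕ)
      = ∑ j : Fin n, ((w j : ℕ)) * m ^ (n - 1 - (j : ℕ)) := by
    rw [← Equiv.sum_comp (Fin.revPerm) (fun j : Fin n => ((w j : ℕ)) * m ^ (n - 1 - (j : ℕ)))]
    refine Finset.sum_congr rfl fun j _ => ?_
    have hj : n - 1 - ((j.rev : Fin n) : ℕ) = (j : ℕ) := by
      rw [Fin.val_rev]; have := j.2; omega
    simp only [Fin.revPerm_apply]
    rw [hj]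
  rw [h1, h2]
  push_cast
  rfl

lemma valm_eq (m n : ℕ) (hm : 1 ≤ m) (w : Fin n → Fin m) :
    valm m n w = ((wordEquiv m n w : ℕ) : ℝ) / ((m : ℝ) ^ n) := by
  have hm' : (0:ℝ) < (m:ℝ) := by exact_mod_cast hm
  rw [wordEquiv_val, Finset.sum_div]
  refine Finset.sum_congr rfl fun j _ => ?_
  rw [div_eq_div_iff (by positivity) (by positivity)]
  rw [mul_assoc, ← pow_add]
  congr 2
  have := j.2
  omega

lemma ImT_eq_grid (μ : Measure UnitAddCircle) (m n : ℕ) (hm : 1 ≤ m) (w : Fin n → Fin m) :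
    ImT m n w = grid (m ^ n) (wordEquiv m n w) := by
  have hm' : (0:ℝ) < (m:ℝ) := by exact_mod_cast hm
  rw [ImT, grid]
  have hcast : ((m ^ n : ℕ) : ℝ) = (m : ℝ) ^ n := by push_cast; rfl
  have h1 : valm m n w = ((wordEquiv m n w : ℕ) : ℝ) / ((m ^ n : ℕ) : ℝ) := by
    rw [hcast]; exact valm_eq m n hm w
  have h2 : valm m n w + ((m : ℝ) ^ n)⁻¹
      = (((wordEquiv m n w : ℕ) : ℝ) + 1) / ((m ^ n : ℕ) : ℝ) := by
    rw [h1, hcast]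
    field_simp
  rw [h2, h1]

lemma measHT_eq_E (μ : Measure UnitAddCircle) (m n : ℕ) (hm : 1 ≤ m) :
    measHT μ m n = Part.E μ (m ^ n) := by
  rw [measHT, Part.E, ← Fin.sum_univ_eq_sum_range]
  refine Fintype.sum_equiv (wordEquiv m n) _ _ fun w => ?_
  rw [ImT_eq_grid μ m n hm w]


section Filters
open Filter

lemma liminf_map_eq {g : ℕ → ℝ} {φ : ℕ → ℕ} :
    Filter.liminf (fun N => g (φ N)) Filter.atTop = Filter.liminf g (Filter.map φ Filter.atTop) := by
  rw [Filter.liminf, Filter.liminf, Filter.map_map]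
  rfl

lemma limsup_map_eq {g : ℕ → ℝ} {φ : ℕ → ℕ} :
    Filter.limsup (fun N => g (φ N)) Filter.atTop = Filter.limsup g (Filter.map φ Filter.atTop) := by
  rw [Filter.limsup, Filter.limsup, Filter.map_map]
  rfl

lemma liminf_le_liminf_comp {g : ℕ → ℝ} (h0 : ∀ᶠ n in atTop, 0 ≤ g n)
    (h1 : ∀ᶠ n in atTop, g n ≤ 1) {φ : ℕ → ℕ} (hφ : Tendsto φ atTop atTop) :
    Filter.liminf g atTop ≤ Filter.liminf (fun N => g (φ N)) atTop := by
  rw [liminf_map_eq]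
  haveI : (Filter.map φ (atTop : Filter ℕ)).NeBot := Filter.map_neBot
  refine Filter.liminf_le_liminf_of_le hφ ⟨0, eventually_map.2 h0⟩ ?_
  exact Filter.IsBoundedUnder.isCoboundedUnder_ge ⟨1, eventually_map.2 (eventually_map.2 (hφ.eventually h1))⟩

lemma limsup_comp_le_limsup {g : ℕ → ℝ} (h0 : ∀ᶠ n in atTop, 0 ≤ g n)
    (h1 : ∀ᶠ n in atTop, g n ≤ 1) {φ : ℕ → ℕ} (hφ : Tendsto φ atTop atTop) :
    Filter.limsup (fun N => g (φ N)) atTop ≤ Filter.limsup g atTop := by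
  rw [limsup_map_eq]
  haveI : (Filter.map φ (atTop : Filter ℕ)).NeBot := Filter.map_neBot
  refine Filter.limsup_le_limsup_of_le hφ ?_ ⟨1, eventually_map.2 h1⟩
  exact Filter.IsBoundedUnder.isCoboundedUnder_le ⟨0, eventually_map.2 (eventually_map.2 (hφ.eventually h0))⟩

end Filters

section Main
open Filter Part

variable (μ : Measure UnitAddCircle) [IsProbabilityMeasure μ]

/-- normalized grid entropy -/
def u (N : ℕ) : ℝ := Part.E μ N / Real.log N

lemma u_nonneg (N : ℕ) : 0 ≤ u μ N := by
  rcases Nat.eq_zero_or_pos N with rfl | hN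
  · simp [u]
  · exact div_nonneg (Part.E_nonneg μ _) (Real.log_nonneg (by exact_mod_cast hN))

lemma u_le_one (N : ℕ) : u μ N ≤ 1 := by
  rcases le_or_gt N 1 with hN | hN
  · interval_cases N
    · simp [u, Part.E]
    · simp [u, Part.E]
  · rw [u, div_le_one (Real.log_pos (by exact_mod_cast hN))]
    exact Part.E_le_log μ (by omega)

variable {m : ℕ}

lemma log_pow_cast (n : ℕ) : Real.log ((m ^ n : ℕ) : ℝ) = (n : ℝ) * Real.log m := by
  rw [Nat.cast_pow, Real.log_pow]

variable (hm : 2 ≤ m)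
include hm

lemma tendsto_pow_m : Tendsto (fun n : ℕ => m ^ n) atTop atTop := by
  apply Filter.tendsto_atTop_atTop.mpr
  intro b
  refine ⟨b, fun a ha => ?_⟩
  calc b ≤ a := ha
    _ ≤ m ^ a := (Nat.lt_pow_self (by omega : 1 < m) : a < m ^ a).le

lemma tendsto_natLog : Tendsto (fun N => Nat.log m N) atTop atTop := by
  apply Filter.tendsto_atTop_atTop.mpr
  intro b
  refine ⟨m ^ b, fun a ha => ?_⟩
  have ha0 : a ≠ 0 := by
    have : 1 ≤ m ^ b := Nat.one_le_pow _ _ (by omega)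
    omega
  exact (Nat.le_log_iff_pow_le (by omega) ha0).mpr ha

lemma measHT_congr_g :
    (fun n => measHT μ m n / ((n : ℝ) * Real.log m)) =ᶠ[atTop]
      (fun n => u μ (m ^ n)) := by
  filter_upwards [eventually_ge_atTop 1] with n hn
  rw [measHT_eq_E μ m n (by omega), u]
  congr 1
  rw [Nat.cast_pow, Real.log_pow]

/-- the two key eventual inequalities -/
lemma key_liminf_ev {δ : ℝ} (hδ : 0 < δ) :
    ∀ᶠ N in atTop, u μ (m ^ (Nat.log m N + 1)) ≤ u μ N + δ := by
  have hlogm : (0:ℝ) < Real.log m := Real.log_pos (by exact_mod_cast hm)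
  have hden : Tendsto (fun N => ((Nat.log m N : ℝ) + 1) * Real.log m) atTop atTop := by
    apply Tendsto.atTop_mul_const hlogm
    exact tendsto_atTop_add_const_right _ 1
      (tendsto_natCast_atTop_atTop.comp (tendsto_natLog (m := m) hm))
  have hε : Tendsto (fun N => Real.log ((m + 2 : ℕ) : ℝ)
      / (((Nat.log m N : ℝ) + 1) * Real.log m)) atTop (nhds 0) :=
    Filter.Tendsto.div_atTop tendsto_const_nhds hden
  filter_upwards [hε.eventually_lt_const hδ, eventually_ge_atTop m] with N hεN hNm
  set n := Nat.log m N with hn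
  have hN1 : 1 ≤ N := by omega
  have hup : N < m ^ (n + 1) := Nat.lt_pow_succ_log_self (by omega) N
  have hdown : m ^ n ≤ N := Nat.pow_log_le_self m (by omega)
  have hcomp := (Part.E_compare μ (N := N) (M := m ^ (n+1)) hN1 hup.le).1
  have hdivle : m ^ (n+1) / N + 2 ≤ m + 2 := by
    have h1 : m ^ (n+1) / N ≤ m ^ (n+1) / m ^ n :=
      Nat.div_le_div_left hdown ((Nat.pow_pos (by omega : 0 < m) : 0 < m ^ n))
    have h2 : m ^ (n+1) / m ^ n = m := by
      rw [pow_succ, Nat.mul_div_cancel_left _ ((Nat.pow_pos (by omega : 0 < m) : 0 < m ^ n))]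
    exact Nat.add_le_add_right (le_trans h1 (le_of_eq h2)) 2
  have hlogle : Real.log ((m ^ (n+1) / N + 2 : ℕ) : ℝ) ≤ Real.log ((m + 2 : ℕ) : ℝ) := by
    apply Real.log_le_log (by exact_mod_cast (Nat.lt_of_lt_of_le Nat.zero_lt_two (Nat.le_add_left 2 _) : 0 < m ^ (n+1) / N + 2))
    exact_mod_cast hdivle
  have hD : (0:ℝ) < ((n:ℝ) + 1) * Real.log m := by positivity
  have hlogN : (0:ℝ) < Real.log (N : ℝ) := Real.log_pos (by exact_mod_cast by omega : (1:ℝ) < N)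
  have hlogNle : Real.log (N : ℝ) ≤ ((n:ℝ) + 1) * Real.log m := by
    have hcast : ((N:ℝ)) ≤ ((m ^ (n+1) : ℕ) : ℝ) := by exact_mod_cast hup.le
    have := Real.log_le_log (by exact_mod_cast hN1 : (0:ℝ) < (N:ℝ)) hcast
    rwa [log_pow_cast (m := m) (n + 1), Nat.cast_add, Nat.cast_one] at this
  have step1 : u μ (m ^ (n+1)) ≤ (Part.E μ N + Real.log ((m + 2 : ℕ) : ℝ)) / (((n:ℝ) + 1) * Real.log m) := by
    rw [u, log_pow_cast (m := m), Nat.cast_add, Nat.cast_one]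
    apply div_le_div_of_nonneg_right ?_ hD.le
    exact hcomp.trans (by linarith)
  have step2 : (Part.E μ N + Real.log ((m + 2 : ℕ) : ℝ)) / (((n:ℝ) + 1) * Real.log m)
      ≤ u μ N + δ := by
    rw [add_div]
    have h1 : Part.E μ N / (((n:ℝ) + 1) * Real.log m) ≤ u μ N := by
      rw [u]
      exact div_le_div_of_nonneg_left (Part.E_nonneg μ N) hlogN hlogNle
    have h2 : Real.log ((m + 2 : ℕ) : ℝ) / (((n:ℝ) + 1) * Real.log m) ≤ δ := hεN.le
    linarith
  exact step1.trans step2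


lemma key_limsup_ev {δ : ℝ} (hδ : 0 < δ) :
    ∀ᶠ N in atTop, u μ N ≤ u μ (m ^ Nat.log m N) + δ := by
  have hlogm : (0:ℝ) < Real.log m := Real.log_pos (by exact_mod_cast hm)
  have hε : Tendsto (fun N : ℕ => Real.log ((m + 2 : ℕ) : ℝ) / Real.log (N : ℝ))
      atTop (nhds 0) :=
    Filter.Tendsto.div_atTop tendsto_const_nhds
      (Real.tendsto_log_atTop.comp tendsto_natCast_atTop_atTop)
  filter_upwards [hε.eventually_lt_const hδ, eventually_ge_atTop m] with N hεN hNm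
  set n := Nat.log m N with hn
  have hn1 : 1 ≤ n := Nat.log_pos (by omega) hNm
  have hN1 : 1 ≤ N := by omega
  have hup : N < m ^ (n + 1) := Nat.lt_pow_succ_log_self (by omega) N
  have hdown : m ^ n ≤ N := Nat.pow_log_le_self m (by omega)
  have hpow_pos : 0 < m ^ n := (Nat.pow_pos (by omega : 0 < m) : 0 < m ^ n)
  have hcomp := (Part.E_compare μ (N := m ^ n) (M := N) (Nat.one_le_pow _ _ (by omega)) hdown).1
  have hdiv : N / m ^ n < m := by
    rw [Nat.div_lt_iff_lt_mul hpow_pos]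
    calc N < m ^ (n+1) := hup
      _ = m * m ^ n := by rw [pow_succ]; ring
  have hdivle : N / m ^ n + 2 ≤ m + 2 := Nat.add_le_add_right hdiv.le 2
  have hlogle : Real.log ((N / m ^ n + 2 : ℕ) : ℝ) ≤ Real.log ((m + 2 : ℕ) : ℝ) := by
    apply Real.log_le_log
      (by exact_mod_cast (Nat.lt_of_lt_of_le Nat.zero_lt_two (Nat.le_add_left 2 _) : 0 < N / m ^ n + 2))
    exact_mod_cast hdivle
  have hlogN : (0:ℝ) < Real.log (N : ℝ) := Real.log_pos (by exact_mod_cast (by omega : 1 < N))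
  have hD : (0:ℝ) < (n:ℝ) * Real.log m := by
    apply mul_pos _ hlogm
    exact_mod_cast hn1
  have hDle : (n:ℝ) * Real.log m ≤ Real.log (N : ℝ) := by
    have hcast : ((m ^ n : ℕ) : ℝ) ≤ (N : ℝ) := by exact_mod_cast hdown
    have := Real.log_le_log (by exact_mod_cast hpow_pos : (0:ℝ) < ((m ^ n : ℕ):ℝ)) hcast
    rwa [log_pow_cast (m := m) n] at this
  have step1 : u μ N ≤ (Part.E μ (m ^ n) + Real.log ((m + 2 : ℕ) : ℝ)) / Real.log (N : ℝ) := by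
    rw [u]
    apply div_le_div_of_nonneg_right ?_ hlogN.le
    exact hcomp.trans (by linarith)
  have step2 : (Part.E μ (m ^ n) + Real.log ((m + 2 : ℕ) : ℝ)) / Real.log (N : ℝ)
      ≤ u μ (m ^ n) + δ := by
    rw [add_div]
    have h1 : Part.E μ (m ^ n) / Real.log (N : ℝ) ≤ u μ (m ^ n) := by
      rw [u, log_pow_cast (m := m) n]
      exact div_le_div_of_nonneg_left (Part.E_nonneg μ _) hD hDle
    have h2 : Real.log ((m + 2 : ℕ) : ℝ) / Real.log (N : ℝ) ≤ δ := hεN.le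
    linarith
  exact step1.trans step2

theorem liminf_u_eq :
    Filter.liminf (fun n => measHT μ m n / ((n : ℝ) * Real.log m)) Filter.atTop
      = Filter.liminf (u μ) Filter.atTop := by
  have hu0 : ∀ᶠ N in atTop, 0 ≤ u μ N := Filter.Eventually.of_forall (u_nonneg μ)
  have hu1 : ∀ᶠ N in atTop, u μ N ≤ 1 := Filter.Eventually.of_forall (u_le_one μ)
  have hg0 : ∀ᶠ n in atTop, 0 ≤ u μ (m ^ n) := Filter.Eventually.of_forall (fun n => u_nonneg μ _)
  have hg1 : ∀ᶠ n in atTop, u μ (m ^ n) ≤ 1 := Filter.Eventually.of_forall (fun n => u_le_one μ _)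
  rw [Filter.liminf_congr (measHT_congr_g μ hm)]
  apply le_antisymm
  · refine le_of_forall_pos_le_add fun δ hδ => ?_
    have hψ : Tendsto (fun N => Nat.log m N + 1) atTop atTop :=
      tendsto_atTop_mono (fun N => Nat.le_succ _) (tendsto_natLog hm)
    have h1 : Filter.liminf (fun n => u μ (m ^ n)) atTop
        ≤ Filter.liminf (fun N => u μ (m ^ (Nat.log m N + 1))) atTop :=
      liminf_le_liminf_comp hg0 hg1 hψ
    have h2 : Filter.liminf (fun N => u μ (m ^ (Nat.log m N + 1))) atTop
        ≤ Filter.liminf (fun N => u μ N + δ) atTop := by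
      refine Filter.liminf_le_liminf (key_liminf_ev μ hm hδ) ?_ ?_
      · exact ⟨0, eventually_map.2 (Filter.Eventually.of_forall (fun N => u_nonneg μ _))⟩
      · refine Filter.IsBoundedUnder.isCoboundedUnder_ge
          ⟨1 + δ, eventually_map.2 (Filter.Eventually.of_forall (fun N => ?_))⟩
        have := u_le_one μ N
        linarith
    have h3 : Filter.liminf (fun N => u μ N + δ) atTop = Filter.liminf (u μ) atTop + δ := by
      refine liminf_add_const atTop (u μ) δ ?_ ?_
      · exact Filter.IsBoundedUnder.isCoboundedUnder_ge ⟨1, eventually_map.2 hu1⟩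
      · exact ⟨0, eventually_map.2 hu0⟩
    linarith
  · exact liminf_le_liminf_comp hu0 hu1 (tendsto_pow_m hm)

theorem limsup_u_eq :
    Filter.limsup (fun n => measHT μ m n / ((n : ℝ) * Real.log m)) Filter.atTop
      = Filter.limsup (u μ) Filter.atTop := by
  have hu0 : ∀ᶠ N in atTop, 0 ≤ u μ N := Filter.Eventually.of_forall (u_nonneg μ)
  have hu1 : ∀ᶠ N in atTop, u μ N ≤ 1 := Filter.Eventually.of_forall (u_le_one μ)
  have hg0 : ∀ᶠ n in atTop, 0 ≤ u μ (m ^ n) := Filter.Eventually.of_forall (fun n => u_nonneg μ _)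
  have hg1 : ∀ᶠ n in atTop, u μ (m ^ n) ≤ 1 := Filter.Eventually.of_forall (fun n => u_le_one μ _)
  rw [Filter.limsup_congr (measHT_congr_g μ hm)]
  apply le_antisymm
  · exact limsup_comp_le_limsup hu0 hu1 (tendsto_pow_m hm)
  · refine le_of_forall_pos_le_add fun δ hδ => ?_
    have h2 : Filter.limsup (u μ) atTop
        ≤ Filter.limsup (fun N => u μ (m ^ Nat.log m N) + δ) atTop := by
      refine Filter.limsup_le_limsup (key_limsup_ev μ hm hδ) ?_ ?_
      · exact Filter.IsBoundedUnder.isCoboundedUnder_le ⟨0, eventually_map.2 hu0⟩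
      · refine ⟨1 + δ, eventually_map.2 (Filter.Eventually.of_forall (fun N => ?_))⟩
        have := u_le_one μ (m ^ Nat.log m N)
        linarith
    have h3 : Filter.limsup (fun N => u μ (m ^ Nat.log m N) + δ) atTop
        = Filter.limsup (fun N => u μ (m ^ Nat.log m N)) atTop + δ := by
      refine limsup_add_const atTop _ δ ?_ ?_
      · exact ⟨1, eventually_map.2 (Filter.Eventually.of_forall (fun N => u_le_one μ _))⟩
      · exact Filter.IsBoundedUnder.isCoboundedUnder_le
          ⟨0, eventually_map.2 (Filter.Eventually.of_forall (fun N => u_nonneg μ _))⟩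
    have h4 : Filter.limsup (fun N => u μ (m ^ Nat.log m N)) atTop
        ≤ Filter.limsup (fun n => u μ (m ^ n)) atTop :=
      limsup_comp_le_limsup hg0 hg1 (tendsto_natLog hm)
    linarith

end Main
end RenyiAux

end RenyiAuxSection

/-- Rényi dimensions are independent of the partition factor. -/
theorem renyi_dimension_base_invariant
    (μ : Measure UnitAddCircle) (hμ : IsProbabilityMeasure μ)
    (m₁ m₂ : ℕ) (h1 : 2 ≤ m₁) (h2 : 2 ≤ m₂) :
    renyiLower μ m₁ = renyiLower μ m₂ ∧ renyiUpper μ m₁ = renyiUpper μ m₂ := by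
  haveI := hμ
  constructor
  · show Filter.liminf (fun n => measHT μ m₁ n / (n * Real.log m₁)) Filter.atTop
      = Filter.liminf (fun n => measHT μ m₂ n / (n * Real.log m₂)) Filter.atTop
    exact (RenyiAux.liminf_u_eq μ h1).trans (RenyiAux.liminf_u_eq μ h2).symm
  · show Filter.limsup (fun n => measHT μ m₁ n / (n * Real.log m₁)) Filter.atTop
      = Filter.limsup (fun n => measHT μ m₂ n / (n * Real.log m₂)) Filter.atTop
    exact (RenyiAux.limsup_u_eq μ h1).trans (RenyiAux.limsup_u_eq μ h2).symm

end
end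

section
/- Let μ be a Borel probability measure on the torus and m a non-zero positive integer. Let f_m(r) = mr mod 1 and (f_m)_*μ the pushforward measure. Then the lower and upper Rényi dimensions of μ and of (f_m)_*μ coincide: dim_R⁻(μ) = dim_R⁻((f_m)_*μ) and dim_R⁺(μ) = dim_R⁺((f_m)_*μ). -/
open MeasureTheory Filter Topology Real
open scoped ENNReal

noncomputable section

namespace RenyiPushforwardAux

/-! ### Elementary facts about `negMulLog` -/

lemma negMulLog_add_le {a b : ℝ} (ha : 0 ≤ a) (hb : 0 ≤ b) :
    Real.negMulLog (a + b) ≤ Real.negMulLog a + Real.negMulLog b := by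
  have key : ∀ x y : ℝ, 0 ≤ x → 0 ≤ y → x * Real.log x ≤ x * Real.log (x + y) := by
    intro x y hx hy
    rcases hx.eq_or_lt with h | h
    · simp [← h]
    · exact mul_le_mul_of_nonneg_left (Real.log_le_log h (by linarith)) hx
  have k1 := key a b ha hb
  have k2 := key b a hb ha
  rw [add_comm b a] at k2
  simp only [Real.negMulLog, neg_mul]
  nlinarith [k1, k2]

lemma negMulLog_sum_le {ι : Type*} (s : Finset ι) (q : ι → ℝ) (hq : ∀ i ∈ s, 0 ≤ q i) :
    Real.negMulLog (∑ i ∈ s, q i) ≤ ∑ i ∈ s, Real.negMulLog (q i) := by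
  classical
  induction s using Finset.induction_on with
  | empty => simp
  | insert a s hx ih =>
    rw [Finset.sum_insert hx, Finset.sum_insert hx]
    have h1 : 0 ≤ q a := hq a (Finset.mem_insert_self a s)
    have h2 : ∀ i ∈ s, 0 ≤ q i := fun i hi => hq i (Finset.mem_insert_of_mem hi)
    have h3 : 0 ≤ ∑ i ∈ s, q i := Finset.sum_nonneg h2
    calc Real.negMulLog (q a + ∑ i ∈ s, q i)
        ≤ Real.negMulLog (q a) + Real.negMulLog (∑ i ∈ s, q i) := negMulLog_add_le h1 h3
      _ ≤ Real.negMulLog (q a) + ∑ i ∈ s, Real.negMulLog (q i) := by linarith [ih h2]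

lemma sum_negMulLog_le {ι : Type*} (s : Finset ι) (q : ι → ℝ) (hq : ∀ i ∈ s, 0 ≤ q i) :
    ∑ i ∈ s, Real.negMulLog (q i)
      ≤ Real.negMulLog (∑ i ∈ s, q i) + (∑ i ∈ s, q i) * Real.log s.card := by
  classical
  set Q := ∑ i ∈ s, q i with hQ
  have hQ0 : 0 ≤ Q := Finset.sum_nonneg hq
  rcases hQ0.eq_or_lt with h | hQpos
  · have hz : ∀ i ∈ s, q i = 0 := by
      intro i hi
      exact le_antisymm (by
        have := Finset.single_le_sum hq hi
        linarith) (hq i hi)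
    have hzero : ∑ i ∈ s, Real.negMulLog (q i) = 0 :=
      Finset.sum_eq_zero (fun i hi => by rw [hz i hi]; simp)
    rw [hzero, ← h]
    simp
  · have hN0 : 0 < (s.card : ℝ) := by
      rcases Finset.eq_empty_or_nonempty s with rfl | hne
      · exact absurd hQpos (by simp [hQ])
      · exact_mod_cast Nat.cast_pos.2 (Finset.card_pos.2 hne)
    set N : ℝ := (s.card : ℝ) with hNdef
    have key : ∑ i ∈ s, q i * (Real.log Q - Real.log N - Real.log (q i)) ≤ 0 := by
      have hterm : ∀ i ∈ s, q i * (Real.log Q - Real.log N - Real.log (q i)) ≤ Q / N - q i := by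
        intro i hi
        rcases (hq i hi).eq_or_lt with h0 | h0
        · rw [← h0]; simp; positivity
        · have hx : 0 < Q / (N * q i) := by positivity
          have hlog : Real.log Q - Real.log N - Real.log (q i) = Real.log (Q / (N * q i)) := by
            rw [Real.log_div hQpos.ne' (by positivity), Real.log_mul (by positivity) h0.ne']
            ring
          rw [hlog]
          have := Real.log_le_sub_one_of_pos hx
          have h2 := mul_le_mul_of_nonneg_left this h0.le
          calc q i * Real.log (Q / (N * q i)) ≤ q i * (Q / (N * q i) - 1) := h2
            _ = Q / N - q i := by field_simp
      calc ∑ i ∈ s, q i * (Real.log Q - Real.log N - Real.log (q i))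
          ≤ ∑ i ∈ s, (Q / N - q i) := Finset.sum_le_sum hterm
        _ = s.card * (Q / N) - Q := by
            rw [Finset.sum_sub_distrib, Finset.sum_const, ← hQ]; simp [nsmul_eq_mul]
        _ = 0 := by field_simp; rw [hNdef]; ring
    have expand : ∑ i ∈ s, q i * (Real.log Q - Real.log N - Real.log (q i))
        = (Q * Real.log Q - Q * Real.log N) + ∑ i ∈ s, Real.negMulLog (q i) := by
      simp only [mul_sub, Real.negMulLog, neg_mul]
      rw [Finset.sum_sub_distrib, Finset.sum_sub_distrib, ← Finset.sum_mul, ← Finset.sum_mul, ← hQ]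
      rw [Finset.sum_neg_distrib]
      ring
    rw [expand] at key
    have hfin : Real.negMulLog Q + Q * Real.log N = -(Q * Real.log Q) + Q * Real.log N := by
      rw [Real.negMulLog]; ring
    rw [hfin]
    linarith

/-! ### Decomposition of real intervals -/

lemma Ico_eq_biUnion {a δ : ℝ} (hδ : 0 < δ) (c : ℕ) :
    Set.Ico a (a + c * δ) = ⋃ j ∈ Finset.range c, Set.Ico (a + j * δ) (a + (j+1) * δ) := by
  ext t
  simp only [Set.mem_Ico, Set.mem_iUnion, Finset.mem_range, exists_prop]
  constructor
  · rintro ⟨h1, h2⟩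
    have hs0 : (0:ℝ) ≤ (t - a) / δ := div_nonneg (by linarith) hδ.le
    have hsc : (t - a) / δ < c := (div_lt_iff₀ hδ).2 (by linarith)
    have hfl0 : 0 ≤ ⌊(t - a) / δ⌋ := Int.floor_nonneg.2 hs0
    refine ⟨(⌊(t - a) / δ⌋).toNat, ?_, ?_, ?_⟩
    all_goals
      have hjr : (((⌊(t - a) / δ⌋).toNat : ℕ) : ℝ) = ((⌊(t - a) / δ⌋ : ℤ) : ℝ) := by
        exact_mod_cast congrArg (fun z : ℤ => (z : ℝ)) (Int.toNat_of_nonneg hfl0)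
    · have : (((⌊(t - a) / δ⌋).toNat : ℕ) : ℝ) < c := by
        rw [hjr]; exact lt_of_le_of_lt (Int.floor_le _) hsc
      exact_mod_cast this
    · have hjle : (((⌊(t - a) / δ⌋).toNat : ℕ) : ℝ) ≤ (t - a)/δ := by
        rw [hjr]; exact Int.floor_le _
      have := mul_le_mul_of_nonneg_right hjle hδ.le
      rw [div_mul_cancel₀ _ hδ.ne'] at this
      linarith
    · have hjgt : (t - a)/δ < (((⌊(t - a) / δ⌋).toNat : ℕ) : ℝ) + 1 := by
        rw [hjr]; exact Int.lt_floor_add_one _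
      have := mul_lt_mul_of_pos_right hjgt hδ
      rw [div_mul_cancel₀ _ hδ.ne'] at this
      linarith
  · rintro ⟨j, hj, h1, h2⟩
    have hj' : (j:ℝ) + 1 ≤ c := by exact_mod_cast Nat.succ_le_of_lt hj
    have hj0 : (0:ℝ) ≤ (j:ℝ) := by positivity
    constructor
    · nlinarith [hδ.le]
    · nlinarith [hδ.le]

lemma pairwise_Ico (a δ : ℝ) (hδ : 0 < δ) (c : ℕ) :
    Set.PairwiseDisjoint (↑(Finset.range c))
      (fun j : ℕ => Set.Ico (a + j * δ) (a + (j+1) * δ)) := by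
  intro i _ j _ hij
  rcases lt_or_gt_of_ne hij with h | h
  · apply Set.Ico_disjoint_Ico.2
    have : (i:ℝ) + 1 ≤ j := by exact_mod_cast h
    exact le_trans (min_le_left _ _) (le_trans (by nlinarith) (le_max_right _ _))
  · apply Set.Ico_disjoint_Ico.2
    have : (j:ℝ) + 1 ≤ i := by exact_mod_cast h
    exact le_trans (min_le_right _ _) (le_trans (by nlinarith) (le_max_left _ _))

lemma meas_Ico_sum (μ' : Measure ℝ) [IsFiniteMeasure μ'] {a δ : ℝ} (hδ : 0 < δ) (c : ℕ) :
    (μ' (Set.Ico a (a + c * δ))).toReal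
      = ∑ j ∈ Finset.range c, (μ' (Set.Ico (a + j * δ) (a + (j+1) * δ))).toReal := by
  rw [Ico_eq_biUnion hδ c,
    measure_biUnion_finset (pairwise_Ico a δ hδ c) (fun _ _ => measurableSet_Ico),
    ENNReal.toReal_sum (fun _ _ => measure_ne_top _ _)]

lemma sum_range_add' {M : Type*} [AddCommMonoid M] (f : ℕ → M) (a b : ℕ) :
    ∑ i ∈ Finset.range (a + b), f i
      = (∑ i ∈ Finset.range a, f i) + ∑ j ∈ Finset.range b, f (a + j) := by
  induction b with
  | zero => simp
  | succ b ih =>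
    rw [← Nat.add_assoc, Finset.sum_range_succ, ih, Finset.sum_range_succ, add_assoc]

lemma sum_range_mul {M : Type*} [AddCommMonoid M] (c N : ℕ) (f : ℕ → M) :
    ∑ i ∈ Finset.range (c * N), f i
      = ∑ s ∈ Finset.range N, ∑ j ∈ Finset.range c, f (c * s + j) := by
  induction N with
  | zero => simp
  | succ N ih =>
    rw [Nat.mul_succ, sum_range_add', ih, Finset.sum_range_succ]

/-! ### The fundamental domain `[0,1)` of the circle -/

/-- representative of a point of the circle in `[0,1)`. -/
noncomputable def Phi : UnitAddCircle → ℝ := fun x => (AddCircle.equivIco 1 0 x : ℝ)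

lemma measurable_Phi : Measurable Phi :=
  measurable_subtype_coe.comp (AddCircle.measurableEquivIco (T := 1) 0).measurable

lemma Phi_mem (x : UnitAddCircle) : Phi x ∈ Set.Ico (0:ℝ) 1 := by
  have := (AddCircle.equivIco 1 0 x).2
  simpa [Phi] using this

lemma coe_Phi (x : UnitAddCircle) : ((Phi x : ℝ) : UnitAddCircle) = x :=
  (AddCircle.equivIco 1 0).symm_apply_apply x

lemma Phi_coe (t : ℝ) : Phi ((t : ℝ) : UnitAddCircle) = Int.fract t := by
  have := AddCircle.coe_equivIco_mk_apply (p := (1:ℝ)) t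
  simpa [Phi] using this

lemma Phi_coe_of_mem {t : ℝ} (ht : t ∈ Set.Ico (0:ℝ) 1) : Phi ((t : ℝ) : UnitAddCircle) = t := by
  rw [Phi_coe]; exact Int.fract_eq_self.2 ⟨ht.1, ht.2⟩

lemma image_Ico_eq {a b : ℝ} (h : Set.Ico a b ⊆ Set.Ico 0 1) :
    (fun t : ℝ => (t : UnitAddCircle)) '' Set.Ico a b = Phi ⁻¹' Set.Ico a b := by
  ext x
  constructor
  · rintro ⟨t, ht, rfl⟩
    simpa [Set.mem_preimage, Phi_coe_of_mem (h ht)] using ht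
  · intro hx
    exact ⟨Phi x, hx, coe_Phi x⟩

lemma coe_nsmul (m : ℕ) (t : ℝ) :
    (m : ℕ) • ((t : ℝ) : UnitAddCircle) = (((m : ℝ) * t : ℝ) : UnitAddCircle) := by
  rw [← nsmul_eq_mul]
  exact (AddCircle.coe_nsmul (p := (1:ℝ))).symm

/-- preimage of a fundamental-domain interval under multiplication by `m`. -/
lemma smul_preimage (m : ℕ) (hm : 0 < m) {a b : ℝ} (ha : 0 ≤ a) (hb : b ≤ 1) :
    (fun y : UnitAddCircle => m • y) ⁻¹' (Phi ⁻¹' Set.Ico a b)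
      = ⋃ j ∈ Finset.range m, Phi ⁻¹' Set.Ico ((a + j) / m) ((b + j) / m) := by
  have hm0 : (0:ℝ) < (m:ℝ) := by exact_mod_cast hm
  ext x
  have hx : ((Phi x : ℝ) : UnitAddCircle) = x := coe_Phi x
  have hmem := Phi_mem x
  have hPhi : Phi (m • x) = Int.fract ((m:ℝ) * Phi x) := by
    conv_lhs => rw [← hx]
    rw [coe_nsmul, Phi_coe]
  simp only [Set.mem_preimage, Set.mem_iUnion, Finset.mem_range, exists_prop, Set.mem_Ico, hPhi]
  set u := Phi x with hu
  constructor
  · rintro ⟨h1, h2⟩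
    have hmu0 : 0 ≤ (m:ℝ) * u := by nlinarith [hmem.1]
    have hmum : (m:ℝ) * u < m := by nlinarith [hmem.2]
    have hfl0 : 0 ≤ ⌊(m:ℝ) * u⌋ := Int.floor_nonneg.2 hmu0
    refine ⟨(⌊(m:ℝ) * u⌋).toNat, ?_, ?_, ?_⟩
    · have : ((⌊(m:ℝ) * u⌋ : ℤ) : ℝ) < m := lt_of_le_of_lt (Int.floor_le _) hmum
      have h5 : ⌊(m:ℝ) * u⌋ < (m : ℤ) := by exact_mod_cast this
      omega
    · rw [div_le_iff₀ hm0]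
      have : (((⌊(m:ℝ) * u⌋).toNat : ℕ) : ℝ) = ((⌊(m:ℝ) * u⌋ : ℤ) : ℝ) := by
        exact_mod_cast congrArg (fun z : ℤ => (z : ℝ)) (Int.toNat_of_nonneg hfl0)
      rw [this]
      linarith [h1, Int.self_sub_floor ((m:ℝ) * u)]
    · rw [lt_div_iff₀ hm0]
      have : (((⌊(m:ℝ) * u⌋).toNat : ℕ) : ℝ) = ((⌊(m:ℝ) * u⌋ : ℤ) : ℝ) := by
        exact_mod_cast congrArg (fun z : ℤ => (z : ℝ)) (Int.toNat_of_nonneg hfl0)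
      rw [this]
      linarith [h2, Int.self_sub_floor ((m:ℝ) * u)]
  · rintro ⟨j, hj, h1, h2⟩
    rw [div_le_iff₀ hm0] at h1
    rw [lt_div_iff₀ hm0] at h2
    have hfloor : ⌊(m:ℝ) * u⌋ = (j : ℤ) := by
      apply Int.floor_eq_iff.2
      constructor
      · push_cast; linarith
      · push_cast; linarith
    have := Int.self_sub_floor ((m:ℝ) * u)
    rw [hfloor] at this
    push_cast at this
    constructor
    · linarith
    · linarith

/-! ### Indexing of base-`p` words -/

def wordEquiv (p n : ℕ) : (Fin n → Fin p) ≃ Fin (p ^ n) :=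
  (Equiv.arrowCongr (Fin.revPerm : Equiv.Perm (Fin n)) (Equiv.refl (Fin p))).trans
    finFunctionFinEquiv

lemma wordEquiv_val (p n : ℕ) (w : Fin n → Fin p) :
    ((wordEquiv p n w : Fin (p ^ n)) : ℕ) = ∑ j : Fin n, (w j : ℕ) * p ^ (n - 1 - (j : ℕ)) := by
  have h1 : ((wordEquiv p n w : Fin (p ^ n)) : ℕ)
      = ∑ i : Fin n, ((w (Fin.rev i) : ℕ)) * p ^ (i : ℕ) := by
    rw [wordEquiv]
    simp only [Equiv.trans_apply, finFunctionFinEquiv_apply]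
    congr 1
  rw [h1]
  rw [← Equiv.sum_comp (Fin.revPerm : Equiv.Perm (Fin n))
    (fun j => (w j : ℕ) * p ^ (n - 1 - (j : ℕ)))]
  apply Finset.sum_congr rfl
  intro i _
  have hexp : n - 1 - ((Fin.rev i : Fin n) : ℕ) = (i : ℕ) := by
    have := i.2
    rw [Fin.val_rev]
    omega
  simp only [Fin.revPerm_apply, hexp]

lemma valm_eq (p n : ℕ) (hp : 0 < p) (w : Fin n → Fin p) :
    valm p n w = (((wordEquiv p n w : Fin (p ^ n)) : ℕ) : ℝ) / (p : ℝ) ^ n := by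
  rw [wordEquiv_val, valm]
  push_cast
  rw [Finset.sum_div]
  apply Finset.sum_congr rfl
  intro j _
  have hj : (j : ℕ) < n := j.2
  have hpow : (p : ℝ) ^ n = (p : ℝ) ^ ((j : ℕ) + 1) * (p : ℝ) ^ (n - 1 - (j : ℕ)) := by
    rw [← pow_add]
    congr 1
    omega
  have hp0 : (0:ℝ) < (p:ℝ) := by exact_mod_cast hp
  rw [hpow]
  rw [div_eq_div_iff (by positivity) (by positivity)]
  ring

lemma sum_words_eq (p n : ℕ) (hp : 0 < p) (F : ℝ → ℝ) :
    ∑ w : Fin n → Fin p, F (valm p n w) = ∑ s ∈ Finset.range (p ^ n), F ((s : ℝ) / (p : ℝ) ^ n) := by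
  rw [← Fin.sum_univ_eq_sum_range (fun s => F ((s : ℝ) / (p : ℝ) ^ n)) (p ^ n)]
  exact Fintype.sum_equiv (wordEquiv p n) _ _ (fun w => by rw [valm_eq p n hp w])

lemma valm_bounds (p n : ℕ) (hp : 0 < p) (w : Fin n → Fin p) :
    0 ≤ valm p n w ∧ valm p n w + ((p:ℝ) ^ n)⁻¹ ≤ 1 := by
  have h := valm_eq p n hp w
  have hlt : ((wordEquiv p n w : Fin (p ^ n)) : ℕ) < p ^ n := (wordEquiv p n w).2
  have hp0 : (0:ℝ) < (p:ℝ) ^ n := by positivity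
  constructor
  · rw [h]; positivity
  · rw [h]
    have hk1 : (((wordEquiv p n w : Fin (p ^ n)) : ℕ) : ℝ) + 1 ≤ ((p:ℝ)) ^ n := by
      have h2 : (((wordEquiv p n w : Fin (p ^ n)) : ℕ) : ℝ) + 1 ≤ ((p ^ n : ℕ) : ℝ) := by
        exact_mod_cast Nat.succ_le_of_lt hlt
      simpa [Nat.cast_pow] using h2
    have heq : (((wordEquiv p n w : Fin (p ^ n)) : ℕ) : ℝ) / (p:ℝ) ^ n + ((p:ℝ) ^ n)⁻¹
        = ((((wordEquiv p n w : Fin (p ^ n)) : ℕ) : ℝ) + 1) / (p:ℝ) ^ n := by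
      field_simp
    rw [heq, div_le_one hp0]
    exact hk1

/-! ### Cell probabilities -/

/-- probability of the `i`-th cell of the uniform partition of `[0,1)` into `N` cells. -/
noncomputable def q (μ' : Measure ℝ) (N i : ℕ) : ℝ :=
  (μ' (Set.Ico ((i:ℝ) / (N:ℝ)) (((i:ℝ)+1) / (N:ℝ)))).toReal

lemma q_nonneg (μ' : Measure ℝ) (N i : ℕ) : 0 ≤ q μ' N i := ENNReal.toReal_nonneg

lemma q_le_one (μ' : Measure ℝ) [IsProbabilityMeasure μ'] (N i : ℕ) : q μ' N i ≤ 1 := by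
  have := prob_le_one (μ := μ') (s := Set.Ico ((i:ℝ) / (N:ℝ)) (((i:ℝ)+1) / (N:ℝ)))
  calc q μ' N i ≤ (1 : ℝ≥0∞).toReal := ENNReal.toReal_mono (by simp) this
    _ = 1 := by simp

lemma q_total (μ' : Measure ℝ) [IsProbabilityMeasure μ'] (N : ℕ) (hN : 0 < N)
    (h01 : μ' (Set.Ico (0:ℝ) 1) = 1) :
    ∑ i ∈ Finset.range N, q μ' N i = 1 := by
  have hN0 : (0:ℝ) < (N:ℝ) := by exact_mod_cast hN
  have h := meas_Ico_sum μ' (a := 0) (δ := (N:ℝ)⁻¹) (by positivity) N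
  have h1 : (0:ℝ) + (N:ℝ) * (N:ℝ)⁻¹ = 1 := by rw [zero_add]; field_simp
  rw [h1] at h
  have h2 : (μ' (Set.Ico (0:ℝ) 1)).toReal = 1 := by rw [h01]; simp
  rw [← h2, h]
  apply Finset.sum_congr rfl
  intro j _
  unfold q
  congr 2 <;> simp [div_eq_mul_inv]

lemma q_subdiv (μ' : Measure ℝ) [IsProbabilityMeasure μ'] (c N : ℕ) (hc : 0 < c) (hN : 0 < N)
    (s : ℕ) :
    q μ' N s = ∑ j ∈ Finset.range c, q μ' (c * N) (c * s + j) := by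
  have hN0 : (0:ℝ) < (N:ℝ) := by exact_mod_cast hN
  have hc0 : (0:ℝ) < (c:ℝ) := by exact_mod_cast hc
  have h := meas_Ico_sum μ' (a := (s:ℝ) / (N:ℝ)) (δ := ((c:ℝ) * (N:ℝ))⁻¹) (by positivity) c
  have h1 : (s:ℝ) / (N:ℝ) + (c:ℝ) * ((c:ℝ) * (N:ℝ))⁻¹ = ((s:ℝ)+1) / (N:ℝ) := by
    field_simp
  rw [h1] at h
  unfold q
  rw [h]
  apply Finset.sum_congr rfl
  intro j _
  have e1 : (s:ℝ)/(N:ℝ) + (j:ℝ) * ((c:ℝ)*(N:ℝ))⁻¹ = ((c*s+j : ℕ):ℝ) / ((c*N : ℕ):ℝ) := by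
    push_cast; field_simp
  have e2 : (s:ℝ)/(N:ℝ) + ((j:ℝ)+1) * ((c:ℝ)*(N:ℝ))⁻¹ = (((c*s+j : ℕ):ℝ)+1) / ((c*N : ℕ):ℝ) := by
    push_cast; field_simp; ring
  rw [e1, e2]

end RenyiPushforwardAux


namespace RenyiPushforwardAux

/-! ### Entropy of a circle measure via cells -/

lemma measHT_eq_sum (μ0 : Measure UnitAddCircle) (p n : ℕ) (hp : 0 < p) :
    measHT μ0 p n = ∑ s ∈ Finset.range (p ^ n),
      Real.negMulLog ((μ0 (Phi ⁻¹' Set.Ico ((s:ℝ) / (p:ℝ) ^ n)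
        ((s:ℝ) / (p:ℝ) ^ n + ((p:ℝ) ^ n)⁻¹))).toReal) := by
  have himt : ∀ w : Fin n → Fin p,
      ImT p n w = Phi ⁻¹' Set.Ico (valm p n w) (valm p n w + ((p:ℝ) ^ n)⁻¹) := by
    intro w
    rw [ImT, image_Ico_eq]
    intro t ht
    rcases valm_bounds p n hp w with ⟨hb1, hb2⟩
    exact ⟨le_trans hb1 ht.1, lt_of_lt_of_le ht.2 hb2⟩
  rw [measHT]
  rw [Finset.sum_congr rfl (fun w _ => by rw [himt w])]
  exact sum_words_eq p n hp
    (fun v => Real.negMulLog ((μ0 (Phi ⁻¹' Set.Ico v (v + ((p:ℝ) ^ n)⁻¹))).toReal))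

lemma cell_measure (μ : Measure UnitAddCircle) (p n s : ℕ) (hp : 0 < p) :
    (μ (Phi ⁻¹' Set.Ico ((s:ℝ) / (p:ℝ) ^ n) ((s:ℝ) / (p:ℝ) ^ n + ((p:ℝ) ^ n)⁻¹))).toReal
      = q (Measure.map Phi μ) (p ^ n) s := by
  have hp0 : (0:ℝ) < (p:ℝ) ^ n := by positivity
  rw [q, Measure.map_apply measurable_Phi measurableSet_Ico]
  have e2 : (s:ℝ) / (p:ℝ) ^ n + ((p:ℝ) ^ n)⁻¹ = ((s:ℝ) + 1) / ((p ^ n : ℕ) : ℝ) := by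
    rw [Nat.cast_pow]; field_simp
  have e1 : (s:ℝ) / (p:ℝ) ^ n = (s:ℝ) / ((p ^ n : ℕ) : ℝ) := by rw [Nat.cast_pow]
  rw [e2, e1]

lemma pushforward_cell_measure (μ : Measure UnitAddCircle) [IsProbabilityMeasure μ]
    (m p n s : ℕ) (hm : 0 < m) (hp : 0 < p) (hs : s < p ^ n) :
    ((Measure.map (fun y : UnitAddCircle => m • y) μ)
        (Phi ⁻¹' Set.Ico ((s:ℝ) / (p:ℝ) ^ n) ((s:ℝ) / (p:ℝ) ^ n + ((p:ℝ) ^ n)⁻¹))).toReal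
      = ∑ j ∈ Finset.range m, q (Measure.map Phi μ) (m * p ^ n) (s + j * p ^ n) := by
  have hp0 : (0:ℝ) < (p:ℝ) ^ n := by positivity
  have hm0 : (0:ℝ) < (m:ℝ) := by exact_mod_cast hm
  have hs1 : ((s:ℝ) + 1) ≤ (p:ℝ) ^ n := by
    have : ((s:ℝ) + 1) ≤ ((p ^ n : ℕ) : ℝ) := by exact_mod_cast Nat.succ_le_of_lt hs
    simpa [Nat.cast_pow] using this
  have ha : (0:ℝ) ≤ (s:ℝ) / (p:ℝ) ^ n := by positivity
  have hb : (s:ℝ) / (p:ℝ) ^ n + ((p:ℝ) ^ n)⁻¹ ≤ 1 := by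
    have e : (s:ℝ) / (p:ℝ) ^ n + ((p:ℝ) ^ n)⁻¹ = ((s:ℝ) + 1) / (p:ℝ) ^ n := by field_simp
    rw [e, div_le_one hp0]
    exact hs1
  have hmble : Measurable (fun y : UnitAddCircle => m • y) := (continuous_nsmul m).measurable
  rw [Measure.map_apply hmble (measurable_Phi measurableSet_Ico)]
  rw [smul_preimage m hm ha hb]
  rw [measure_biUnion_finset ?disj (fun _ _ => measurable_Phi measurableSet_Ico)]
  case disj =>
    intro i _ j _ hij
    apply Disjoint.preimage
    rcases lt_or_gt_of_ne hij with h | h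
    · apply Set.Ico_disjoint_Ico.2
      have hij' : (i:ℝ) + 1 ≤ (j:ℝ) := by exact_mod_cast h
      refine le_trans (min_le_left _ _) (le_trans ?_ (le_max_right _ _))
      rw [div_le_div_iff₀ hm0 hm0]
      nlinarith [hb, ha]
    · apply Set.Ico_disjoint_Ico.2
      have hij' : (j:ℝ) + 1 ≤ (i:ℝ) := by exact_mod_cast h
      refine le_trans (min_le_right _ _) (le_trans ?_ (le_max_left _ _))
      rw [div_le_div_iff₀ hm0 hm0]
      nlinarith [hb, ha]
  rw [ENNReal.toReal_sum (fun _ _ => measure_ne_top _ _)]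
  apply Finset.sum_congr rfl
  intro j _
  rw [q, Measure.map_apply measurable_Phi measurableSet_Ico]
  have e1 : ((s:ℝ) / (p:ℝ) ^ n + (j:ℝ)) / (m:ℝ)
      = ((s + j * p ^ n : ℕ) : ℝ) / ((m * p ^ n : ℕ) : ℝ) := by
    push_cast
    rw [div_eq_div_iff hm0.ne' (by positivity)]
    field_simp
  have e2 : ((s:ℝ) / (p:ℝ) ^ n + ((p:ℝ) ^ n)⁻¹ + (j:ℝ)) / (m:ℝ)
      = (((s + j * p ^ n : ℕ) : ℝ) + 1) / ((m * p ^ n : ℕ) : ℝ) := by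
    push_cast
    rw [div_eq_div_iff hm0.ne' (by positivity)]
    field_simp
    ring
  rw [e1, e2]

end RenyiPushforwardAux

namespace RenyiPushforwardAux

/-! ### The key entropy estimate -/

set_option maxHeartbeats 1000000 in
lemma entropy_bounds (μ : Measure UnitAddCircle) [IsProbabilityMeasure μ]
    (m p : ℕ) (hm : 0 < m) (hp : 2 ≤ p) (n : ℕ) :
    |measHT μ p n - measHT (Measure.map (fun y : UnitAddCircle => m • y) μ) p n| ≤ Real.log m ∧
    0 ≤ measHT μ p n ∧ measHT μ p n ≤ n * Real.log p ∧
    0 ≤ measHT (Measure.map (fun y : UnitAddCircle => m • y) μ) p n ∧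
    measHT (Measure.map (fun y : UnitAddCircle => m • y) μ) p n ≤ n * Real.log p := by
  have hp0 : 0 < p := lt_of_lt_of_le two_pos hp
  have hP : 0 < p ^ n := pow_pos hp0 n
  set μ' : Measure ℝ := Measure.map Phi μ with hμ'
  haveI : IsProbabilityMeasure μ' := Measure.isProbabilityMeasure_map measurable_Phi.aemeasurable
  set ν : Measure UnitAddCircle := Measure.map (fun y : UnitAddCircle => m • y) μ with hν
  have h01 : μ' (Set.Ico (0:ℝ) 1) = 1 := by
    rw [hμ', Measure.map_apply measurable_Phi measurableSet_Ico]
    have he : Phi ⁻¹' Set.Ico (0:ℝ) 1 = Set.univ := Set.eq_univ_of_forall (fun x => Phi_mem x)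
    rw [he, measure_univ]
  have hA : measHT μ p n = ∑ s ∈ Finset.range (p ^ n), Real.negMulLog (q μ' (p ^ n) s) := by
    rw [measHT_eq_sum μ p n hp0]
    exact Finset.sum_congr rfl (fun s _ => by rw [cell_measure μ p n s hp0])
  have hB : measHT ν p n = ∑ s ∈ Finset.range (p ^ n),
      Real.negMulLog (∑ j ∈ Finset.range m, q μ' (m * p ^ n) (s + j * p ^ n)) := by
    rw [measHT_eq_sum ν p n hp0]
    exact Finset.sum_congr rfl (fun s hsmem => by
      rw [hν, pushforward_cell_measure μ m p n s hm hp0 (Finset.mem_range.1 hsmem)])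
  set H : ℝ := ∑ i ∈ Finset.range (m * p ^ n), Real.negMulLog (q μ' (m * p ^ n) i) with hH
  have hH1 : H = ∑ s ∈ Finset.range (p ^ n), ∑ j ∈ Finset.range m,
      Real.negMulLog (q μ' (m * p ^ n) (m * s + j)) := sum_range_mul m (p ^ n) _
  have hswap : ∀ f : ℕ → ℝ, ∑ i ∈ Finset.range (m * p ^ n), f i
      = ∑ s ∈ Finset.range (p ^ n), ∑ j ∈ Finset.range m, f (s + j * p ^ n) := by
    intro f
    rw [mul_comm m (p ^ n), sum_range_mul (p ^ n) m f, Finset.sum_comm]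
    refine Finset.sum_congr rfl (fun s _ => Finset.sum_congr rfl (fun j _ => ?_))
    congr 1
    ring
  have hH2 : H = ∑ s ∈ Finset.range (p ^ n), ∑ j ∈ Finset.range m,
      Real.negMulLog (q μ' (m * p ^ n) (s + j * p ^ n)) := hswap _
  have hq0 : ∀ N i, 0 ≤ q μ' N i := q_nonneg μ'
  have htotP : ∑ s ∈ Finset.range (p ^ n), q μ' (p ^ n) s = 1 := q_total μ' (p ^ n) hP h01
  have hsub : ∀ s, q μ' (p ^ n) s = ∑ j ∈ Finset.range m, q μ' (m * p ^ n) (m * s + j) :=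
    fun s => q_subdiv μ' m (p ^ n) hm hP s
  have htotM : ∑ s ∈ Finset.range (p ^ n),
      ∑ j ∈ Finset.range m, q μ' (m * p ^ n) (s + j * p ^ n) = 1 := by
    rw [← hswap (q μ' (m * p ^ n))]
    exact q_total μ' (m * p ^ n) (Nat.mul_pos hm hP) h01
  have hA1 : measHT μ p n ≤ H := by
    rw [hA, hH1]
    refine Finset.sum_le_sum (fun s _ => ?_)
    rw [hsub s]
    exact negMulLog_sum_le _ _ (fun j _ => hq0 _ _)
  have hA2 : H ≤ measHT μ p n + Real.log m := by
    rw [hA, hH1]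
    have hterm : ∀ s ∈ Finset.range (p ^ n),
        ∑ j ∈ Finset.range m, Real.negMulLog (q μ' (m * p ^ n) (m * s + j))
        ≤ Real.negMulLog (q μ' (p ^ n) s) + q μ' (p ^ n) s * Real.log m := by
      intro s _
      have h := sum_negMulLog_le (Finset.range m)
        (fun j => q μ' (m * p ^ n) (m * s + j)) (fun j _ => hq0 _ _)
      rw [Finset.card_range] at h
      rw [hsub s]
      exact h
    calc ∑ s ∈ Finset.range (p ^ n), ∑ j ∈ Finset.range m,
          Real.negMulLog (q μ' (m * p ^ n) (m * s + j))
        ≤ ∑ s ∈ Finset.range (p ^ n),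
            (Real.negMulLog (q μ' (p ^ n) s) + q μ' (p ^ n) s * Real.log m) :=
          Finset.sum_le_sum hterm
      _ = (∑ s ∈ Finset.range (p ^ n), Real.negMulLog (q μ' (p ^ n) s))
            + (∑ s ∈ Finset.range (p ^ n), q μ' (p ^ n) s) * Real.log m := by
          rw [Finset.sum_add_distrib, ← Finset.sum_mul]
      _ = (∑ s ∈ Finset.range (p ^ n), Real.negMulLog (q μ' (p ^ n) s)) + Real.log m := by
          rw [htotP, one_mul]
  have hB1 : measHT ν p n ≤ H := by
    rw [hB, hH2]
    exact Finset.sum_le_sum (fun s _ => negMulLog_sum_le _ _ (fun j _ => hq0 _ _))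
  have hB2 : H ≤ measHT ν p n + Real.log m := by
    rw [hB, hH2]
    have hterm : ∀ s ∈ Finset.range (p ^ n),
        ∑ j ∈ Finset.range m, Real.negMulLog (q μ' (m * p ^ n) (s + j * p ^ n))
        ≤ Real.negMulLog (∑ j ∈ Finset.range m, q μ' (m * p ^ n) (s + j * p ^ n))
          + (∑ j ∈ Finset.range m, q μ' (m * p ^ n) (s + j * p ^ n)) * Real.log m := by
      intro s _
      have h := sum_negMulLog_le (Finset.range m)
        (fun j => q μ' (m * p ^ n) (s + j * p ^ n)) (fun j _ => hq0 _ _)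
      rw [Finset.card_range] at h
      exact h
    calc ∑ s ∈ Finset.range (p ^ n), ∑ j ∈ Finset.range m,
          Real.negMulLog (q μ' (m * p ^ n) (s + j * p ^ n))
        ≤ ∑ s ∈ Finset.range (p ^ n),
            (Real.negMulLog (∑ j ∈ Finset.range m, q μ' (m * p ^ n) (s + j * p ^ n))
              + (∑ j ∈ Finset.range m, q μ' (m * p ^ n) (s + j * p ^ n)) * Real.log m) :=
          Finset.sum_le_sum hterm
      _ = (∑ s ∈ Finset.range (p ^ n),
            Real.negMulLog (∑ j ∈ Finset.range m, q μ' (m * p ^ n) (s + j * p ^ n)))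
            + (∑ s ∈ Finset.range (p ^ n),
                ∑ j ∈ Finset.range m, q μ' (m * p ^ n) (s + j * p ^ n)) * Real.log m := by
          rw [Finset.sum_add_distrib, ← Finset.sum_mul]
      _ = (∑ s ∈ Finset.range (p ^ n),
            Real.negMulLog (∑ j ∈ Finset.range m, q μ' (m * p ^ n) (s + j * p ^ n)))
            + Real.log m := by rw [htotM, one_mul]
  have hlogP : Real.log (((p ^ n : ℕ) : ℝ)) = n * Real.log p := by
    rw [Nat.cast_pow, Real.log_pow]
  have hAupper : measHT μ p n ≤ n * Real.log p := by
    rw [hA]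
    have h := sum_negMulLog_le (Finset.range (p ^ n)) (q μ' (p ^ n)) (fun i _ => hq0 _ _)
    rw [Finset.card_range, htotP] at h
    simpa [hlogP] using h
  have hBupper : measHT ν p n ≤ n * Real.log p := by
    rw [hB]
    have h := sum_negMulLog_le (Finset.range (p ^ n))
      (fun s => ∑ j ∈ Finset.range m, q μ' (m * p ^ n) (s + j * p ^ n))
      (fun s _ => Finset.sum_nonneg (fun j _ => hq0 _ _))
    rw [Finset.card_range, htotM] at h
    simpa [hlogP] using h
  have hA0 : 0 ≤ measHT μ p n := by
    rw [hA]
    exact Finset.sum_nonneg (fun s _ => Real.negMulLog_nonneg (hq0 _ _) (q_le_one μ' _ _))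
  have hB0 : 0 ≤ measHT ν p n := by
    rw [hB]
    refine Finset.sum_nonneg (fun s hs => Real.negMulLog_nonneg
      (Finset.sum_nonneg (fun j _ => hq0 _ _)) ?_)
    have hle := Finset.single_le_sum
      (f := fun i => ∑ j ∈ Finset.range m, q μ' (m * p ^ n) (i + j * p ^ n))
      (fun i _ => Finset.sum_nonneg (fun j _ => hq0 _ _)) hs
    exact le_trans hle (le_of_eq htotM)
  refine ⟨abs_le.2 ⟨by linarith, by linarith⟩, hA0, hAupper, hB0, hBupper⟩

/-! ### liminf/limsup under a vanishing perturbation -/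

lemma liminf_le_liminf_of_tendsto_sub {f g : ℕ → ℝ}
    (h0f : ∀ n, 0 ≤ f n) (h1f : ∀ n, f n ≤ 1) (h0g : ∀ n, 0 ≤ g n) (h1g : ∀ n, g n ≤ 1)
    (h : Filter.Tendsto (fun n => f n - g n) Filter.atTop (nhds 0)) :
    Filter.liminf f Filter.atTop ≤ Filter.liminf g Filter.atTop := by
  refine _root_.le_of_forall_pos_le_add (fun ε hε => ?_)
  have hev : ∀ᶠ n in Filter.atTop, f n ≤ g n + ε := by
    have h2 := h.eventually_lt_const hε
    exact h2.mono (fun n hn => by linarith)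
  have hf_above : Filter.IsBoundedUnder (· ≤ ·) Filter.atTop f :=
    Filter.isBoundedUnder_of ⟨1, fun n => h1f n⟩
  have hg_above : Filter.IsBoundedUnder (· ≤ ·) Filter.atTop g :=
    Filter.isBoundedUnder_of ⟨1, fun n => h1g n⟩
  have hg_below : Filter.IsBoundedUnder (· ≥ ·) Filter.atTop g :=
    Filter.isBoundedUnder_of ⟨0, fun n => h0g n⟩
  have hf_below : Filter.IsBoundedUnder (· ≥ ·) Filter.atTop f :=
    Filter.isBoundedUnder_of ⟨0, fun n => h0f n⟩
  have hge_above : Filter.IsBoundedUnder (· ≤ ·) Filter.atTop (fun n => g n + ε) :=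
    Filter.isBoundedUnder_of ⟨1 + ε, fun n => by have := h1g n; linarith⟩
  have step1 : Filter.liminf f Filter.atTop ≤ Filter.liminf (fun n => g n + ε) Filter.atTop :=
    Filter.liminf_le_liminf hev hf_below hge_above.isCoboundedUnder_ge
  have step2 : Filter.liminf (fun n => g n + ε) Filter.atTop
      = Filter.liminf g Filter.atTop + ε :=
    liminf_add_const Filter.atTop g ε hg_above.isCoboundedUnder_ge hg_below
  rw [step2] at step1
  exact step1

lemma limsup_le_limsup_of_tendsto_sub {f g : ℕ → ℝ}
    (h0f : ∀ n, 0 ≤ f n) (h1f : ∀ n, f n ≤ 1) (h0g : ∀ n, 0 ≤ g n) (h1g : ∀ n, g n ≤ 1)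
    (h : Filter.Tendsto (fun n => f n - g n) Filter.atTop (nhds 0)) :
    Filter.limsup f Filter.atTop ≤ Filter.limsup g Filter.atTop := by
  refine _root_.le_of_forall_pos_le_add (fun ε hε => ?_)
  have hev : ∀ᶠ n in Filter.atTop, f n ≤ g n + ε := by
    have h2 := h.eventually_lt_const hε
    exact h2.mono (fun n hn => by linarith)
  have hf_below : Filter.IsBoundedUnder (· ≥ ·) Filter.atTop f :=
    Filter.isBoundedUnder_of ⟨0, fun n => h0f n⟩
  have hg_above : Filter.IsBoundedUnder (· ≤ ·) Filter.atTop g :=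
    Filter.isBoundedUnder_of ⟨1, fun n => h1g n⟩
  have hg_below : Filter.IsBoundedUnder (· ≥ ·) Filter.atTop g :=
    Filter.isBoundedUnder_of ⟨0, fun n => h0g n⟩
  have hge_above : Filter.IsBoundedUnder (· ≤ ·) Filter.atTop (fun n => g n + ε) :=
    Filter.isBoundedUnder_of ⟨1 + ε, fun n => by have := h1g n; linarith⟩
  have step1 : Filter.limsup f Filter.atTop ≤ Filter.limsup (fun n => g n + ε) Filter.atTop :=
    Filter.limsup_le_limsup hev hf_below.isCoboundedUnder_le hge_above
  have step2 : Filter.limsup (fun n => g n + ε) Filter.atTop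
      = Filter.limsup g Filter.atTop + ε :=
    limsup_add_const Filter.atTop g ε hg_above hg_below.isCoboundedUnder_le
  rw [step2] at step1
  exact step1

lemma liminf_limsup_eq_of_tendsto_sub {f g : ℕ → ℝ}
    (h0f : ∀ n, 0 ≤ f n) (h1f : ∀ n, f n ≤ 1) (h0g : ∀ n, 0 ≤ g n) (h1g : ∀ n, g n ≤ 1)
    (h : Filter.Tendsto (fun n => f n - g n) Filter.atTop (nhds 0)) :
    Filter.liminf f Filter.atTop = Filter.liminf g Filter.atTop ∧
    Filter.limsup f Filter.atTop = Filter.limsup g Filter.atTop := by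
  have h' : Filter.Tendsto (fun n => g n - f n) Filter.atTop (nhds 0) := by
    have := h.neg
    simpa using this
  exact ⟨le_antisymm (liminf_le_liminf_of_tendsto_sub h0f h1f h0g h1g h)
      (liminf_le_liminf_of_tendsto_sub h0g h1g h0f h1f h'),
    le_antisymm (limsup_le_limsup_of_tendsto_sub h0f h1f h0g h1g h)
      (limsup_le_limsup_of_tendsto_sub h0g h1g h0f h1f h')⟩

end RenyiPushforwardAux


/-- Rényi dimensions are invariant under pushforward by multiplication by m. -/
theorem renyi_dimension_pushforward_invariant
    (μ : Measure UnitAddCircle) (hμ : IsProbabilityMeasure μ) (m : ℕ) (hm : 0 < m)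
    (p : ℕ) (hp : 2 ≤ p) :
    renyiLower μ p = renyiLower (Measure.map (fun y : UnitAddCircle => m • y) μ) p ∧
    renyiUpper μ p = renyiUpper (Measure.map (fun y : UnitAddCircle => m • y) μ) p := by
  haveI := hμ
  have hp1 : (1:ℝ) < (p:ℝ) := by exact_mod_cast lt_of_lt_of_le one_lt_two hp
  have hlogp : 0 < Real.log p := Real.log_pos hp1
  have hkey := fun n => RenyiPushforwardAux.entropy_bounds μ m p hm hp n
  set f : ℕ → ℝ := fun n => measHT μ p n / (n * Real.log p) with hf
  set g : ℕ → ℝ := fun n =>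
    measHT (Measure.map (fun y : UnitAddCircle => m • y) μ) p n / (n * Real.log p) with hg
  have hd : ∀ n : ℕ, 0 < n → 0 < (n:ℝ) * Real.log p := by
    intro n hn
    have : (0:ℝ) < n := by exact_mod_cast hn
    positivity
  have hbounds : ∀ n, (0 ≤ f n ∧ f n ≤ 1) ∧ (0 ≤ g n ∧ g n ≤ 1) := by
    intro n
    obtain ⟨habs, hA0, hA1, hB0, hB1⟩ := hkey n
    rcases Nat.eq_zero_or_pos n with rfl | hn
    · simp [hf, hg]
    · have hdn := hd n hn
      exact ⟨⟨div_nonneg hA0 hdn.le, (div_le_one hdn).2 hA1⟩,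
        ⟨div_nonneg hB0 hdn.le, (div_le_one hdn).2 hB1⟩⟩
  have htend : Filter.Tendsto (fun n => f n - g n) Filter.atTop (nhds 0) := by
    have hmaj : Filter.Tendsto (fun n : ℕ => Real.log m * ((n:ℝ) * Real.log p)⁻¹)
        Filter.atTop (nhds 0) := by
      have h1 : Filter.Tendsto (fun n : ℕ => (n:ℝ) * Real.log p) Filter.atTop Filter.atTop :=
        Filter.Tendsto.atTop_mul_const hlogp tendsto_natCast_atTop_atTop
      have h2 := h1.inv_tendsto_atTop
      have h3 := h2.const_mul (Real.log m)
      simpa using h3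
    refine squeeze_zero_norm (fun n => ?_) hmaj
    rcases Nat.eq_zero_or_pos n with rfl | hn
    · simp [hf, hg]
    · obtain ⟨habs, hA0, hA1, hB0, hB1⟩ := hkey n
      have hdn := hd n hn
      have heq : f n - g n
          = (measHT μ p n - measHT (Measure.map (fun y : UnitAddCircle => m • y) μ) p n)
            / ((n:ℝ) * Real.log p) := by
        rw [hf, hg]
        rw [div_sub_div_same]
      rw [heq, Real.norm_eq_abs, abs_div, abs_of_pos hdn, mul_comm (Real.log (m:ℝ))
        (((n:ℝ) * Real.log p)⁻¹), ← div_eq_inv_mul]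
      exact div_le_div_of_nonneg_right habs hdn.le
  obtain ⟨hli, hls⟩ := RenyiPushforwardAux.liminf_limsup_eq_of_tendsto_sub
    (fun n => (hbounds n).1.1) (fun n => (hbounds n).1.2)
    (fun n => (hbounds n).2.1) (fun n => (hbounds n).2.2) htend
  exact ⟨hli, hls⟩


end
end

section
/- If x ∈ {0,1}^∞ is μ-normal for a Borel probability measure μ on Cantor space, then μ is invariant under the left shift T, and dim_FS(x) = Dim_FS(x) = H⁺(μ) = H⁻(μ). -/
open MeasureTheory Filter Topology Real
open scoped ENNReal

noncomputable section

section AuxLemmas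

open Finset

/-! ### negMulLog2 basics -/

lemma negMulLog2_eq (p : ℝ) : negMulLog2 p = Real.negMulLog p / Real.log 2 := by
  simp [negMulLog2, Real.negMulLog, Real.logb, neg_mul, div_eq_mul_inv]; ring

lemma continuous_negMulLog2 : Continuous negMulLog2 := by
  simp only [funext negMulLog2_eq]
  exact Real.continuous_negMulLog.div_const _

lemma negMulLog2_nonneg {p : ℝ} (h0 : 0 ≤ p) (h1 : p ≤ 1) : 0 ≤ negMulLog2 p := by
  rw [negMulLog2_eq]
  exact div_nonneg (Real.negMulLog_nonneg h0 h1) (Real.log_nonneg one_le_two)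

/-! ### cylinders -/

lemma measurableSet_cyl (l : ℕ) (w : Fin l → Bool) : MeasurableSet (Cyl l w) := by
  have : Cyl l w = ⋂ j : Fin l, ((fun y : Cantor => y (j : ℕ)) ⁻¹' {w j}) := by
    ext y; simp [Cyl, Set.mem_iInter]
  rw [this]
  exact MeasurableSet.iInter fun j => (measurable_pi_apply _) (measurableSet_singleton _)

lemma cyl_disjoint {l : ℕ} {w w' : Fin l → Bool} (h : w ≠ w') :
    Disjoint (Cyl l w) (Cyl l w') := by
  rw [Set.disjoint_left]
  intro y hy hy'
  exact h (funext fun j => (hy j).symm.trans (hy' j))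

lemma iUnion_cyl (l : ℕ) : (⋃ w : Fin l → Bool, Cyl l w) = Set.univ := by
  ext y
  simp only [Set.mem_iUnion, Set.mem_univ, iff_true]
  exact ⟨fun j => y (j : ℕ), fun j => rfl⟩

lemma sum_measure_cyl (μ : Measure Cantor) [IsProbabilityMeasure μ] (l : ℕ) :
    ∑ w : Fin l → Bool, μ (Cyl l w) = 1 := by
  have h : μ (⋃ w ∈ (Finset.univ : Finset (Fin l → Bool)), Cyl l w)
      = ∑ w : Fin l → Bool, μ (Cyl l w) :=
    measure_biUnion_finset (fun w _ w' _ hww' => cyl_disjoint hww')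
      (fun w _ => measurableSet_cyl l w)
  simp only [Finset.mem_univ, Set.iUnion_true] at h
  rw [← h, iUnion_cyl l, measure_univ]

/-! ### Gibbs inequality -/

lemma gibbs_ineq {ι : Type*} [Fintype ι] (a b : ι → ℝ) (ha : ∀ i, 0 ≤ a i)
    (hb : ∀ i, 0 ≤ b i) (hab : ∀ i, a i ≠ 0 → b i ≠ 0)
    (hsum : ∑ i, a i = ∑ i, b i) :
    ∑ i, Real.negMulLog (a i) ≤ ∑ i, -(a i * Real.log (b i)) := by
  have key : ∀ i, Real.negMulLog (a i) - -(a i * Real.log (b i)) ≤ b i - a i := by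
    intro i
    rcases eq_or_lt_of_le (ha i) with h0 | h0
    · simp [← h0, Real.negMulLog, hb i]
    · have hbi : 0 < b i := (hb i).lt_of_ne' (hab i (ne_of_gt h0))
      have hlog : Real.log (b i / a i) ≤ b i / a i - 1 :=
        Real.log_le_sub_one_of_pos (div_pos hbi h0)
      rw [Real.log_div (ne_of_gt hbi) (ne_of_gt h0)] at hlog
      have := mul_le_mul_of_nonneg_left hlog (le_of_lt h0)
      rw [mul_sub, mul_sub, mul_div_cancel₀ _ (ne_of_gt h0), mul_one] at this
      simp only [Real.negMulLog, neg_mul]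
      nlinarith
  calc ∑ i, Real.negMulLog (a i)
      = ∑ i, (Real.negMulLog (a i) - -(a i * Real.log (b i))) + ∑ i, -(a i * Real.log (b i)) := by
        rw [← Finset.sum_add_distrib]; congr 1; ext i; ring
    _ ≤ ∑ i, (b i - a i) + ∑ i, -(a i * Real.log (b i)) := by
        exact add_le_add (Finset.sum_le_sum fun i _ => key i) le_rfl
    _ = ∑ i, -(a i * Real.log (b i)) := by
        rw [Finset.sum_sub_distrib, hsum]; ring

/-! ### measH basics -/

lemma measH_nonneg (μ : Measure Cantor) [IsProbabilityMeasure μ] (n : ℕ) :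
    0 ≤ measH μ n := by
  apply Finset.sum_nonneg
  intro w _
  apply negMulLog2_nonneg ENNReal.toReal_nonneg
  exact ENNReal.toReal_le_of_le_ofReal one_pos.le (by simpa using prob_le_one)

lemma measH_zero (μ : Measure Cantor) [IsProbabilityMeasure μ] : measH μ 0 = 0 := by
  have : ∀ w : Fin 0 → Bool, Cyl 0 w = Set.univ := by
    intro w; ext y; simp [Cyl]
  simp [measH, this, negMulLog2]

/-! ### glueing words -/

def glueEquiv (m n : ℕ) : (Fin m → Bool) × (Fin n → Bool) ≃ (Fin (m + n) → Bool) :=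
  (Equiv.sumArrowEquivProdArrow (Fin m) (Fin n) Bool).symm.trans
    (Equiv.arrowCongr finSumFinEquiv (Equiv.refl Bool))

lemma mem_cyl_glue {m n : ℕ} {u : Fin m → Bool} {v : Fin n → Bool} {y : Cantor} :
    y ∈ Cyl (m + n) (glueEquiv m n (u, v)) ↔ (y ∈ Cyl m u ∧ shiftk y m ∈ Cyl n v) := by
  have hval : ∀ k : Fin (m + n),
      glueEquiv m n (u, v) k = Sum.elim u v (finSumFinEquiv.symm k) := fun k => rfl
  constructor
  · intro h
    refine ⟨fun i => ?_, fun j => ?_⟩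
    · have := h (Fin.castAdd n i)
      rwa [hval, finSumFinEquiv_symm_apply_castAdd, Sum.elim_inl, Fin.coe_castAdd] at this
    · have := h (Fin.natAdd m j)
      rw [hval, finSumFinEquiv_symm_apply_natAdd, Sum.elim_inr, Fin.coe_natAdd] at this
      simpa [shiftk, Nat.add_comm] using this
  · rintro ⟨h1, h2⟩ k
    rw [hval]
    refine Fin.addCases (fun i => ?_) (fun j => ?_) k
    · rw [finSumFinEquiv_symm_apply_castAdd, Sum.elim_inl, Fin.coe_castAdd]
      exact h1 i
    · rw [finSumFinEquiv_symm_apply_natAdd, Sum.elim_inr, Fin.coe_natAdd]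
      have := h2 j
      simpa [shiftk, Nat.add_comm] using this

lemma iUnion_cyl_glue_right {m n : ℕ} (u : Fin m → Bool) :
    (⋃ v : Fin n → Bool, Cyl (m + n) (glueEquiv m n (u, v))) = Cyl m u := by
  ext y
  simp only [Set.mem_iUnion, mem_cyl_glue]
  exact ⟨fun ⟨v, h⟩ => h.1, fun h => ⟨fun j => shiftk y m (j : ℕ), h, fun j => rfl⟩⟩

lemma iUnion_cyl_glue_left {m n : ℕ} (v : Fin n → Bool) :
    (⋃ u : Fin m → Bool, Cyl (m + n) (glueEquiv m n (u, v))) = (fun y => shiftk y m) ⁻¹' Cyl n v := by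
  ext y
  simp only [Set.mem_iUnion, mem_cyl_glue, Set.mem_preimage]
  exact ⟨fun ⟨u, h⟩ => h.2, fun h => ⟨fun i => y (i : ℕ), ⟨fun i => rfl, h⟩⟩⟩

lemma measurable_shiftk (m : ℕ) : Measurable fun y : Cantor => shiftk y m :=
  measurable_pi_lambda _ fun i => measurable_pi_apply _

lemma sum_measure_glue_right (μ : Measure Cantor) {m n : ℕ} (u : Fin m → Bool) :
    ∑ v : Fin n → Bool, μ (Cyl (m + n) (glueEquiv m n (u, v))) = μ (Cyl m u) := by
  have h : μ (⋃ v ∈ (Finset.univ : Finset (Fin n → Bool)), Cyl (m + n) (glueEquiv m n (u, v)))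
      = ∑ v : Fin n → Bool, μ (Cyl (m + n) (glueEquiv m n (u, v))) := by
    refine measure_biUnion_finset (fun v _ v' _ hvv' => cyl_disjoint ?_)
      (fun v _ => measurableSet_cyl _ _)
    exact fun hc => hvv' (by simpa using (glueEquiv m n).injective hc)
  simp only [Finset.mem_univ, Set.iUnion_true] at h
  rw [← h, iUnion_cyl_glue_right]

lemma sum_measure_glue_left (μ : Measure Cantor) {m n : ℕ} (v : Fin n → Bool) :
    ∑ u : Fin m → Bool, μ (Cyl (m + n) (glueEquiv m n (u, v)))
      = μ ((fun y => shiftk y m) ⁻¹' Cyl n v) := by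
  have h : μ (⋃ u ∈ (Finset.univ : Finset (Fin m → Bool)), Cyl (m + n) (glueEquiv m n (u, v)))
      = ∑ u : Fin m → Bool, μ (Cyl (m + n) (glueEquiv m n (u, v))) := by
    refine measure_biUnion_finset (fun u _ u' _ huu' => cyl_disjoint ?_)
      (fun u _ => measurableSet_cyl _ _)
    exact fun hc => huu' (by simpa using (glueEquiv m n).injective hc)
  simp only [Finset.mem_univ, Set.iUnion_true] at h
  rw [← h, iUnion_cyl_glue_left]

lemma shiftk_invariant (μ : Measure Cantor)
    (hinv : ∀ A : Set Cantor, MeasurableSet A → μ (Tshift ⁻¹' A) = μ A) (m : ℕ)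
    {A : Set Cantor} (hA : MeasurableSet A) :
    μ ((fun y => shiftk y m) ⁻¹' A) = μ A := by
  induction m with
  | zero => rfl
  | succ m ih =>
    have hcomp : (fun y => shiftk y (m + 1)) = (fun y => shiftk y m) ∘ Tshift := rfl
    rw [hcomp, Set.preimage_comp, hinv _ ((measurable_shiftk m) hA)]
    exact ih

lemma measH_subadditive (μ : Measure Cantor) [IsProbabilityMeasure μ]
    (hinv : ∀ A : Set Cantor, MeasurableSet A → μ (Tshift ⁻¹' A) = μ A) :
    Subadditive (measH μ) := by
  intro m n
  set P : (Fin m → Bool) × (Fin n → Bool) → ℝ :=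
    fun p => (μ (Cyl (m + n) (glueEquiv m n p))).toReal with hPdef
  set A : (Fin m → Bool) → ℝ := fun u => (μ (Cyl m u)).toReal with hAdef
  set B : (Fin n → Bool) → ℝ := fun v => (μ (Cyl n v)).toReal with hBdef
  have hPnn : ∀ p, 0 ≤ P p := fun p => ENNReal.toReal_nonneg
  have hAnn : ∀ u, 0 ≤ A u := fun u => ENNReal.toReal_nonneg
  have hBnn : ∀ v, 0 ≤ B v := fun v => ENNReal.toReal_nonneg
  have hmargA : ∀ u, ∑ v, P (u, v) = A u := by
    intro u
    rw [hAdef]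
    simp only [hPdef]
    rw [← ENNReal.toReal_sum (fun v _ => measure_ne_top μ _), sum_measure_glue_right μ u]
  have hmargB : ∀ v, ∑ u, P (u, v) = B v := by
    intro v
    rw [hBdef]
    simp only [hPdef]
    rw [← ENNReal.toReal_sum (fun u _ => measure_ne_top μ _), sum_measure_glue_left μ v,
      shiftk_invariant μ hinv m (measurableSet_cyl n v)]
  have hA1 : ∑ u, A u = 1 := by
    simp only [hAdef]
    rw [← ENNReal.toReal_sum (fun u _ => measure_ne_top μ _), sum_measure_cyl μ m,
      ENNReal.toReal_one]
  have hB1 : ∑ v, B v = 1 := by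
    simp only [hBdef]
    rw [← ENNReal.toReal_sum (fun v _ => measure_ne_top μ _), sum_measure_cyl μ n,
      ENNReal.toReal_one]
  have hP1 : ∑ p, P p = 1 := by
    rw [Fintype.sum_prod_type]
    simp only [hmargA]
    exact hA1
  have hPleA : ∀ p : (Fin m → Bool) × (Fin n → Bool), P p ≤ A p.1 := by
    rintro ⟨u, v⟩
    rw [← hmargA u]
    exact Finset.single_le_sum (fun v' _ => hPnn (u, v')) (Finset.mem_univ v)
  have hPleB : ∀ p : (Fin m → Bool) × (Fin n → Bool), P p ≤ B p.2 := by
    rintro ⟨u, v⟩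
    rw [← hmargB v]
    exact Finset.single_le_sum (fun u' _ => hPnn (u', v)) (Finset.mem_univ u)
  -- Gibbs
  have hgibbs : ∑ p, Real.negMulLog (P p) ≤ ∑ p : (Fin m → Bool) × (Fin n → Bool),
      -(P p * Real.log (A p.1 * B p.2)) := by
    refine gibbs_ineq P (fun p => A p.1 * B p.2) hPnn
      (fun p => mul_nonneg (hAnn _) (hBnn _)) (fun p hp => ?_) ?_
    · have hA0 : A p.1 ≠ 0 := fun h => hp (le_antisymm (h ▸ hPleA p) (hPnn p))
      have hB0 : B p.2 ≠ 0 := fun h => hp (le_antisymm (h ▸ hPleB p) (hPnn p))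
      exact mul_ne_zero hA0 hB0
    · rw [hP1, Fintype.sum_prod_type]
      simp only [← Finset.mul_sum, hB1, mul_one]
      rw [hA1]
  have hsplit : ∑ p : (Fin m → Bool) × (Fin n → Bool), -(P p * Real.log (A p.1 * B p.2))
      = ∑ u, Real.negMulLog (A u) + ∑ v, Real.negMulLog (B v) := by
    have hterm : ∀ p : (Fin m → Bool) × (Fin n → Bool),
        -(P p * Real.log (A p.1 * B p.2))
          = -(P p * Real.log (A p.1)) + -(P p * Real.log (B p.2)) := by
      intro p
      rcases eq_or_ne (P p) 0 with h0 | h0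
      · simp [h0]
      · have hA0 : A p.1 ≠ 0 := fun h => h0 (le_antisymm (h ▸ hPleA p) (hPnn p))
        have hB0 : B p.2 ≠ 0 := fun h => h0 (le_antisymm (h ▸ hPleB p) (hPnn p))
        rw [Real.log_mul hA0 hB0]; ring
    rw [Finset.sum_congr rfl (fun p _ => hterm p), Finset.sum_add_distrib]
    congr 1
    · rw [Fintype.sum_prod_type]
      refine Finset.sum_congr rfl fun u _ => ?_
      simp only [← neg_mul]
      rw [← Finset.sum_mul, Finset.sum_neg_distrib, hmargA u]
      simp [Real.negMulLog]
    · rw [Fintype.sum_prod_type_right]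
      refine Finset.sum_congr rfl fun v _ => ?_
      simp only [← neg_mul]
      rw [← Finset.sum_mul, Finset.sum_neg_distrib, hmargB v]
      simp [Real.negMulLog]
  have hEq : measH μ (m + n) = ∑ p, negMulLog2 (P p) := by
    rw [measH]
    exact (Equiv.sum_comp (glueEquiv m n)
      fun w => negMulLog2 ((μ (Cyl (m + n) w)).toReal)).symm
  have hlog2 : (0:ℝ) < Real.log 2 := Real.log_pos one_lt_two
  rw [hEq, measH, measH]
  simp only [negMulLog2_eq, ← Finset.sum_div]
  rw [← add_div, div_le_div_iff_of_pos_right hlog2]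
  calc ∑ p, Real.negMulLog (P p)
      ≤ ∑ p : (Fin m → Bool) × (Fin n → Bool), -(P p * Real.log (A p.1 * B p.2)) := hgibbs
    _ = _ := hsplit

/-! ### the sliding-count estimate for left extension -/

lemma slidingP_cons_sum_bound (x : Cantor) (l : ℕ) (w : Fin l → Bool) {n : ℕ}
    (hn : l + 1 ≤ n) :
    |(∑ b : Bool, slidingP x n (l + 1) (Fin.cons b w)) - slidingP x n l w|
      ≤ 2 / ((n - l : ℕ) : ℝ) := by
  classical
  set m : ℕ := n - (l + 1) with hm
  have hml : n - l = m + 1 := by omega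
  have hml2 : n - l + 1 = m + 2 := by omega
  have hml3 : n - (l + 1) + 1 = m + 1 := by omega
  -- the sets
  set S : Bool → Finset ℕ := fun b => (Finset.range (m + 1)).filter
    (fun i => ∀ j : Fin (l + 1), x (i + (j : ℕ)) = (Fin.cons b w : Fin (l+1) → Bool) j) with hS
  set A : Finset ℕ := (Finset.range (m + 1)).filter
    (fun i => ∀ j : Fin l, x (i + 1 + (j : ℕ)) = w j) with hA
  set B : Finset ℕ := (Finset.range (m + 2)).filter
    (fun i => ∀ j : Fin l, x (i + (j : ℕ)) = w j) with hB
  -- `A` is the disjoint union of `S true` and `S false`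
  have hSsub : ∀ b, S b ⊆ A := by
    intro b i hi
    rw [hS, Finset.mem_filter] at hi
    rw [hA, Finset.mem_filter]
    refine ⟨hi.1, fun j => ?_⟩
    have := hi.2 (Fin.succ j)
    rwa [Fin.cons_succ, Fin.val_succ, ← Nat.add_assoc, Nat.add_right_comm i (j : ℕ) 1] at this
  have hAsub : ∀ i ∈ A, i ∈ S (x i) := by
    intro i hi
    rw [hA, Finset.mem_filter] at hi
    rw [hS, Finset.mem_filter]
    refine ⟨hi.1, fun j => ?_⟩
    refine Fin.cases ?_ (fun j' => ?_) j
    · simp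
    · rw [Fin.cons_succ, Fin.val_succ, ← Nat.add_assoc]
      rw [Nat.add_right_comm i (j' : ℕ) 1]
      exact hi.2 j'
  have hunion : S true ∪ S false = A := by
    apply Finset.Subset.antisymm
    · exact Finset.union_subset (hSsub true) (hSsub false)
    · intro i hi
      rcases Bool.eq_false_or_eq_true (x i) with h | h
      · have hx := hAsub i hi; rw [h] at hx; exact Finset.mem_union_left _ hx
      · have hx := hAsub i hi; rw [h] at hx; exact Finset.mem_union_right _ hx
  have hdisj : Disjoint (S true) (S false) := by
    rw [Finset.disjoint_left]
    intro i h1 h2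
    rw [hS, Finset.mem_filter] at h1 h2
    have e1 := h1.2 0
    have e2 := h2.2 0
    simp only [Fin.val_zero, Nat.add_zero, Fin.cons_zero] at e1 e2
    rw [e1] at e2
    exact Bool.noConfusion e2
  have hcardsum : (S true).card + (S false).card = A.card := by
    rw [← Finset.card_union_of_disjoint hdisj, hunion]
  -- compare `A` and `B`
  have hAB : A.card ≤ B.card := by
    apply Finset.card_le_card_of_injOn (fun i => i + 1)
    · intro i hi
      simp only [hA, Finset.mem_coe, Finset.mem_filter, Finset.mem_range] at hi
      simp only [hB, Finset.mem_coe, Finset.mem_filter, Finset.mem_range]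
      exact ⟨by omega, hi.2⟩
    · intro a _ b _ h; simpa using h
  have hBA : B.card ≤ A.card + 1 := by
    have hsub : B ⊆ insert 0 (A.image (fun i => i + 1)) := by
      intro i hi
      rw [hB, Finset.mem_filter, Finset.mem_range] at hi
      rcases Nat.eq_zero_or_pos i with h0 | h0
      · rw [h0]; exact Finset.mem_insert_self _ _
      · apply Finset.mem_insert_of_mem
        rw [Finset.mem_image]
        refine ⟨i - 1, ?_, by omega⟩
        rw [hA, Finset.mem_filter, Finset.mem_range]
        constructor
        · omega
        · intro j
          have := hi.2 j
          rwa [show i - 1 + 1 + (j : ℕ) = i + (j : ℕ) by omega]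
    calc B.card ≤ (insert 0 (A.image (fun i => i + 1))).card := Finset.card_le_card hsub
      _ ≤ (A.image (fun i => i + 1)).card + 1 := Finset.card_insert_le _ _
      _ ≤ A.card + 1 := by
          exact Nat.add_le_add_right (Finset.card_image_le) 1
  have hAle : A.card ≤ m + 1 := by
    calc A.card ≤ (Finset.range (m + 1)).card := Finset.card_le_card (Finset.filter_subset _ _)
      _ = m + 1 := Finset.card_range _
  -- now the real estimate
  have hsum1 : (∑ b : Bool, slidingP x n (l + 1) (Fin.cons b w))
      = (A.card : ℝ) / ((m + 1 : ℕ) : ℝ) := by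
    unfold slidingP
    rw [hml3, Fintype.sum_bool, ← add_div, ← hcardsum]
    push_cast
    ring
  have hsl : slidingP x n l w = (B.card : ℝ) / ((m + 2 : ℕ) : ℝ) := by
    unfold slidingP
    rw [hml2]
  rw [hsum1, hsl, hml]
  set a : ℝ := (A.card : ℝ) with ha
  set c : ℝ := (B.card : ℝ) with hc
  have hM : ((m + 1 : ℕ) : ℝ) = (m : ℝ) + 1 := by push_cast; ring
  have hM2 : ((m + 2 : ℕ) : ℝ) = (m : ℝ) + 2 := by push_cast; ring
  rw [hM, hM2]
  set M : ℝ := (m : ℝ) + 1 with hMdef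
  have hM1 : 1 ≤ M := by have : (0:ℝ) ≤ (m:ℝ) := Nat.cast_nonneg m; linarith
  have hM0 : 0 < M := by linarith
  have hMM : (m : ℝ) + 2 = M + 1 := by rw [hMdef]; ring
  rw [hMM]
  have ha0 : 0 ≤ a := Nat.cast_nonneg _
  have hc0 : 0 ≤ c := Nat.cast_nonneg _
  have haM : a ≤ M := by rw [ha, hMdef]; exact_mod_cast hAle
  have hac : a ≤ c := by rw [ha, hc]; exact_mod_cast hAB
  have hca : c ≤ a + 1 := by rw [ha, hc]; exact_mod_cast hBA
  have key : |a * (M + 1) - M * c| ≤ 2 * M := by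
    rw [abs_le]
    constructor <;> nlinarith
  calc |a / M - c / (M + 1)| = |a * (M + 1) - M * c| / (M * (M + 1)) := by
        rw [div_sub_div _ _ (ne_of_gt hM0) (by positivity), abs_div,
          abs_of_pos (mul_pos hM0 (by linarith : (0:ℝ) < M + 1))]
    _ ≤ (2 * M) / (M * (M + 1)) := by gcongr
    _ ≤ 2 / M := by
        rw [div_le_div_iff₀ (by positivity) hM0]
        nlinarith

/-! ### limit consequence: left extension of cylinder measures -/

lemma measure_cyl_cons (x : Cantor) (μ : Measure Cantor) [IsProbabilityMeasure μ]
    (hnorm : ∀ (l : ℕ) (w : Fin l → Bool),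
      Tendsto (fun n => slidingP x n l w) atTop (nhds ((μ (Cyl l w)).toReal)))
    (l : ℕ) (w : Fin l → Bool) :
    μ (Cyl (l + 1) (Fin.cons true w)) + μ (Cyl (l + 1) (Fin.cons false w)) = μ (Cyl l w) := by
  have h1 : Tendsto (fun n => ∑ b : Bool, slidingP x n (l + 1) (Fin.cons b w)) atTop
      (𝓝 (∑ b : Bool, (μ (Cyl (l + 1) (Fin.cons b w))).toReal)) :=
    tendsto_finset_sum _ (fun b _ => hnorm (l + 1) (Fin.cons b w))
  have hz : Tendsto (fun n : ℕ => 2 / ((n - l : ℕ) : ℝ)) atTop (𝓝 0) :=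
    (tendsto_const_div_atTop_nhds_zero_nat 2).comp (tendsto_sub_atTop_nat l)
  have hd : Tendsto (fun n => (∑ b : Bool, slidingP x n (l + 1) (Fin.cons b w))
      - slidingP x n l w) atTop (𝓝 0) := by
    apply squeeze_zero_norm' ?_ hz
    filter_upwards [eventually_ge_atTop (l + 1)] with n hn
    exact slidingP_cons_sum_bound x l w hn
  have h2 : Tendsto (fun n => ∑ b : Bool, slidingP x n (l + 1) (Fin.cons b w)) atTop
      (𝓝 ((μ (Cyl l w)).toReal)) := by
    have := hd.add (hnorm l w)
    rw [zero_add] at this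
    refine this.congr fun n => ?_
    ring
  have hreal : ∑ b : Bool, (μ (Cyl (l + 1) (Fin.cons b w))).toReal = (μ (Cyl l w)).toReal :=
    tendsto_nhds_unique h1 h2
  rw [Fintype.sum_bool, ← ENNReal.toReal_add (measure_ne_top μ _) (measure_ne_top μ _)] at hreal
  exact (ENNReal.toReal_eq_toReal_iff'
    (ENNReal.add_ne_top.mpr ⟨measure_ne_top μ _, measure_ne_top μ _⟩)
    (measure_ne_top μ _)).mp hreal

/-! ### preimage of a cylinder under the shift -/

lemma measurable_Tshift : Measurable Tshift :=
  measurable_pi_lambda _ fun i => measurable_pi_apply _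

lemma Tshift_preimage_cyl (l : ℕ) (w : Fin l → Bool) :
    Tshift ⁻¹' (Cyl l w) = Cyl (l + 1) (Fin.cons true w) ∪ Cyl (l + 1) (Fin.cons false w) := by
  ext y
  simp only [Set.mem_preimage, Set.mem_union, Cyl, Set.mem_setOf_eq]
  constructor
  · intro h
    have key : ∀ b : Bool, y 0 = b → ∀ j : Fin (l + 1), y (j : ℕ) = (Fin.cons b w : Fin (l+1) → Bool) j := by
      intro b hb j
      refine Fin.cases ?_ (fun j' => ?_) j
      · simpa using hb
      · rw [Fin.cons_succ, Fin.val_succ]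
        exact h j'
    rcases Bool.eq_false_or_eq_true (y 0) with h0 | h0
    · exact Or.inl (key true h0)
    · exact Or.inr (key false h0)
  · rintro (h | h) <;> · intro j
                         have := h (Fin.succ j)
                         rwa [Fin.cons_succ, Fin.val_succ] at this
  
/-! ### the cylinder π-system generates the σ-algebra -/

def cylSets : Set (Set Cantor) := {S | ∃ l w, S = Cyl l w}

lemma isPiSystem_cylSets : IsPiSystem cylSets := by
  have key : ∀ {l l' : ℕ} (h : l ≤ l') (w : Fin l → Bool) (w' : Fin l' → Bool),
      (Cyl l w ∩ Cyl l' w').Nonempty → Cyl l w ∩ Cyl l' w' = Cyl l' w' := by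
    intro l l' h w w' ⟨y0, hy0⟩
    apply Set.Subset.antisymm Set.inter_subset_right
    intro z hz
    refine ⟨fun j => ?_, hz⟩
    have e1 : y0 (j : ℕ) = w j := hy0.1 j
    have e2 := hy0.2 ⟨(j : ℕ), lt_of_lt_of_le j.2 h⟩
    have e3 := hz ⟨(j : ℕ), lt_of_lt_of_le j.2 h⟩
    exact e3.trans (e2.symm.trans e1)
  rintro s ⟨l, w, rfl⟩ t ⟨l', w', rfl⟩ hst
  rcases le_total l l' with h | h
  · rw [key h w w' hst]
    exact ⟨l', w', rfl⟩
  · rw [Set.inter_comm] at hst ⊢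
    rw [key h w' w hst]
    exact ⟨l, w, rfl⟩

lemma generateFrom_cylSets :
    (inferInstance : MeasurableSpace Cantor) = MeasurableSpace.generateFrom cylSets := by
  apply le_antisymm
  · have hmeas : ∀ i : ℕ, @Measurable Cantor Bool (MeasurableSpace.generateFrom cylSets) ⊤
        (fun y => y i) := by
      intro i s _
      have hsingle : ∀ b : Bool, MeasurableSet[MeasurableSpace.generateFrom cylSets]
          {y : Cantor | y i = b} := by
        intro b
        have hset : {y : Cantor | y i = b}
            = ⋃ w : {w : Fin (i + 1) → Bool // w (Fin.last i) = b}, Cyl (i + 1) (w : _) := by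
          ext y
          simp only [Set.mem_setOf_eq, Set.mem_iUnion]
          constructor
          · intro h
            refine ⟨⟨fun j => y (j : ℕ), ?_⟩, fun j => rfl⟩
            simpa [Fin.val_last] using h
          · rintro ⟨⟨w, hw⟩, hyw⟩
            have := hyw (Fin.last i)
            simp only [Fin.val_last] at this
            rw [this, hw]
        rw [hset]
        exact MeasurableSet.iUnion fun w =>
          MeasurableSpace.measurableSet_generateFrom ⟨i + 1, (w : _), rfl⟩
      have hpre : (fun y : Cantor => y i) ⁻¹' s = ⋃ b ∈ s, {y : Cantor | y i = b} := by
        ext y; simp [Set.mem_preimage]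
      rw [hpre]
      exact MeasurableSet.biUnion (Set.to_countable s) fun b _ => hsingle b
    have : (inferInstance : MeasurableSpace Cantor) = MeasurableSpace.pi := rfl
    rw [this, MeasurableSpace.pi]
    exact iSup_le fun i => Measurable.comap_le (hmeas i)
  · exact MeasurableSpace.generateFrom_le fun s hs => by
      obtain ⟨l, w, rfl⟩ := hs
      exact measurableSet_cyl l w

/-! ### shift invariance -/

lemma map_Tshift_eq (x : Cantor) (μ : Measure Cantor) [IsProbabilityMeasure μ]
    (hnorm : ∀ (l : ℕ) (w : Fin l → Bool),
      Tendsto (fun n => slidingP x n l w) atTop (nhds ((μ (Cyl l w)).toReal))) :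
    μ.map Tshift = μ := by
  have hprob : IsProbabilityMeasure (μ.map Tshift) :=
    Measure.isProbabilityMeasure_map measurable_Tshift.aemeasurable
  refine ext_of_generate_finite cylSets generateFrom_cylSets isPiSystem_cylSets ?_ ?_
  · rintro s ⟨l, w, rfl⟩
    rw [Measure.map_apply measurable_Tshift (measurableSet_cyl l w), Tshift_preimage_cyl,
      measure_union ?_ (measurableSet_cyl _ _), measure_cyl_cons x μ hnorm l w]
    apply cyl_disjoint
    intro hcc
    have := congrFun hcc 0
    simp at this
  · simp [measure_univ]

lemma tshift_invariant (x : Cantor) (μ : Measure Cantor) [IsProbabilityMeasure μ]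
    (hnorm : ∀ (l : ℕ) (w : Fin l → Bool),
      Tendsto (fun n => slidingP x n l w) atTop (nhds ((μ (Cyl l w)).toReal))) :
    ∀ A : Set Cantor, MeasurableSet A → μ (Tshift ⁻¹' A) = μ A := by
  intro A hA
  rw [← Measure.map_apply measurable_Tshift hA, map_Tshift_eq x μ hnorm]

/-! ### convergence of sliding entropies -/

lemma tendsto_slidingH (x : Cantor) (μ : Measure Cantor)
    (hnorm : ∀ (l : ℕ) (w : Fin l → Bool),
      Tendsto (fun n => slidingP x n l w) atTop (nhds ((μ (Cyl l w)).toReal)))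
    (l : ℕ) :
    Tendsto (fun n => slidingH x n (l + 1)) atTop
      (𝓝 (measH μ (l + 1) / ((l + 1 : ℕ) : ℝ))) := by
  have hsum : Tendsto
      (fun n => ∑ w : Fin (l + 1) → Bool, negMulLog2 (slidingP x n (l + 1) w)) atTop
      (𝓝 (∑ w : Fin (l + 1) → Bool, negMulLog2 ((μ (Cyl (l + 1) w)).toReal))) :=
    tendsto_finset_sum _ fun w _ => (continuous_negMulLog2.tendsto _).comp (hnorm (l + 1) w)
  have h := hsum.const_mul (1 / ((l + 1 : ℕ) : ℝ))
  have heq : measH μ (l + 1) / ((l + 1 : ℕ) : ℝ)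
      = 1 / ((l + 1 : ℕ) : ℝ) * ∑ w : Fin (l + 1) → Bool, negMulLog2 ((μ (Cyl (l + 1) w)).toReal) := by
    rw [measH]; ring
  rw [heq]
  exact h

end AuxLemmas
/-- μ-normality implies shift-invariance of μ and equality of the
finite-state dimensions with the average entropies of μ. -/
theorem mu_normal_shift_invariant_and_dims
    (x : Cantor) (μ : Measure Cantor) (hμ : IsProbabilityMeasure μ)
    (hnorm : ∀ (l : ℕ) (w : Fin l → Bool),
      Tendsto (fun n => slidingP x n l w) atTop (nhds ((μ (Cyl l w)).toReal))) :
    (∀ A : Set Cantor, MeasurableSet A → μ (Tshift ⁻¹' A) = μ A) ∧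
    dimFS x = DimFS x ∧ dimFS x = Hplus μ ∧ Hplus μ = Hminus μ := by
  haveI := hμ
  have hinv := tshift_invariant x μ hnorm
  have hsub : Subadditive (measH μ) := measH_subadditive μ hinv
  have hbdd : BddBelow (Set.range fun n : ℕ => measH μ n / n) := by
    refine ⟨0, ?_⟩
    rintro r ⟨n, rfl⟩
    exact div_nonneg (measH_nonneg μ n) (Nat.cast_nonneg n)
  have hlim := hsub.tendsto_lim hbdd
  have hdim : dimFS x = ⨅ l : ℕ, measH μ (l + 1) / ((l + 1 : ℕ) : ℝ) :=
    iInf_congr fun l => (tendsto_slidingH x μ hnorm l).liminf_eq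
  have hDim : DimFS x = ⨅ l : ℕ, measH μ (l + 1) / ((l + 1 : ℕ) : ℝ) :=
    iInf_congr fun l => (tendsto_slidingH x μ hnorm l).limsup_eq
  have hinf : (⨅ l : ℕ, measH μ (l + 1) / ((l + 1 : ℕ) : ℝ)) = hsub.lim := by
    apply le_antisymm
    · refine ge_of_tendsto (hlim.comp (tendsto_add_atTop_nat 1)) ?_
      refine Filter.Eventually.of_forall fun l => ?_
      refine ciInf_le ⟨0, ?_⟩ l
      rintro r ⟨k, rfl⟩
      exact div_nonneg (measH_nonneg μ (k + 1)) (Nat.cast_nonneg _)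
    · exact le_ciInf fun l => hsub.lim_le_div hbdd (Nat.succ_ne_zero l)
  have hHp : Hplus μ = hsub.lim := hlim.limsup_eq
  have hHm : Hminus μ = hsub.lim := hlim.liminf_eq
  exact ⟨hinv, hdim.trans hDim.symm, hdim.trans (hinf.trans hHp.symm), hHp.trans hHm.symm⟩

end
end
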